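/- arXiv:math/0607348 — 2 statements merged into one kernel-verified Lean document; each statement's English description precedes it below -/
import Mathlib

section
/- Let k be an algebraically closed field and A = kQ/⟨P⟩ a gentle algebra with Q connected and not the Kronecker quiver. Then: (1) N(A) is a normal subgroup of Aut_*^l(A); (2) S(Q1) ∩ N(A) = {id_A}; (3) every f ∈ Aut_*^l(A) can be written as f = h ∘ g with h ∈ N(A) and g ∈ S(Q1), so Aut_*^l(A) = S(Q1) ⋉ N(A); and (4) S(Q1) is isomorphic as a group to the direct product (k*)^{#Q1}, via the map sending (c_α)_{α∈Q1} to the automorphism determined by α ↦ c_α·α. -/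
open scoped Classical

namespace GentlePaper

/-- A finite quiver. -/
structure Quiv where
  V : Type
  A : Type
  [fintV : Fintype V]
  [fintA : Fintype A]
  [decV : DecidableEq V]
  [decA : DecidableEq A]
  src : A → V
  tgt : A → V

attribute [instance] Quiv.fintV Quiv.fintA Quiv.decV Quiv.decA

/-- A set of relations of length two: `P a b` means that the length-two path
"first `a`, then `b`" (i.e. the composition `b∘a`) belongs to `P`. -/
abbrev Rels (Q : Quiv) := Q.A → Q.A → Prop

/-- Connectedness of a quiver (as an undirected graph). -/
def Connected (Q : Quiv) : Prop :=
  Nonempty Q.V ∧ ∀ v w : Q.V, Relation.ReflTransGen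
    (fun x y => ∃ a : Q.A, (Q.src a = x ∧ Q.tgt a = y) ∨ (Q.src a = y ∧ Q.tgt a = x)) v w

/-- The number of cycles `c(Q) = #Q₁ - #Q₀ + 1` of a connected quiver. -/
def cQ (Q : Quiv) : ℕ := Fintype.card Q.A + 1 - Fintype.card Q.V

/-- The conditions for `kQ/⟨P⟩` to be a gentle algebra. -/
structure IsGentle (Q : Quiv) (P : Rels Q) : Prop where
  rel_comp : ∀ a b : Q.A, P a b → Q.tgt a = Q.src b
  src_le_two : ∀ v : Q.V, Fintype.card {a : Q.A // Q.src a = v} ≤ 2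
  tgt_le_two : ∀ v : Q.V, Fintype.card {a : Q.A // Q.tgt a = v} ≤ 2
  nonrel_succ_unique : ∀ b c c' : Q.A, Q.src c = Q.tgt b → Q.src c' = Q.tgt b →
    ¬ P b c → ¬ P b c' → c = c'
  nonrel_pred_unique : ∀ b a a' : Q.A, Q.tgt a = Q.src b → Q.tgt a' = Q.src b →
    ¬ P a b → ¬ P a' b → a = a'
  rel_succ_unique : ∀ b c c' : Q.A, P b c → P b c' → c = c'
  rel_pred_unique : ∀ b a a' : Q.A, P a b → P a' b → a = a'
  bounded : ∃ N : ℕ, ∀ l : List Q.A,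
    List.Chain' (fun a b => Q.tgt a = Q.src b) l → l.length = N →
      ∃ (l₁ : List Q.A) (a b : Q.A) (l₂ : List Q.A), l = l₁ ++ a :: b :: l₂ ∧ P a b

/-- Paths of a quiver: either a trivial path at a vertex, or a nonempty list of
composable arrows, recorded in traversal order. -/
def Pth (Q : Quiv) := Q.V ⊕ List Q.A

/-- Two arrows are composable (first `a` then `b`) and do not form a relation. -/
def permPair (Q : Quiv) (P : Rels Q) (a b : Q.A) : Prop := Q.tgt a = Q.src b ∧ ¬ P a b

/-- Two arrows are composable (first `a` then `b`) and form a relation. -/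
def forbPair (Q : Quiv) (P : Rels Q) (a b : Q.A) : Prop := Q.tgt a = Q.src b ∧ P a b

/-- "Nonzero path" in `kQ/⟨P⟩`: a trivial path, or a nonempty composable sequence of
arrows having no length-two subpath in `P`.  For nonempty lists this is exactly the
notion of a permitted path. -/
def pthOk (Q : Quiv) (P : Rels Q) : Pth Q → Prop
  | Sum.inl _ => True
  | Sum.inr l => l ≠ [] ∧ List.Chain' (permPair Q P) l

/-- Start vertex of a path/thread. -/
def thStart (Q : Quiv) : Pth Q → Option Q.V
  | Sum.inl v => some v
  | Sum.inr l => l.head?.map Q.src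

/-- End vertex of a path/thread. -/
def thEnd (Q : Quiv) : Pth Q → Option Q.V
  | Sum.inl v => some v
  | Sum.inr l => l.getLast?.map Q.tgt

/-- Length of a path/thread. -/
def thLen (Q : Quiv) : Pth Q → ℕ
  | Sum.inl _ => 0
  | Sum.inr l => l.length

/-- Permitted threads (trivial and non-trivial ones). -/
def IsPermThread (Q : Quiv) (P : Rels Q) : Pth Q → Prop
  | Sum.inl v => Fintype.card {a : Q.A // Q.src a = v} ≤ 1 ∧
      Fintype.card {a : Q.A // Q.tgt a = v} ≤ 1 ∧
      ∀ b c : Q.A, Q.tgt b = v → Q.src c = v → ¬ P b c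
  | Sum.inr l => l ≠ [] ∧ List.Chain' (permPair Q P) l ∧
      (∀ b : Q.A, ¬ List.Chain' (permPair Q P) (l ++ [b])) ∧
      (∀ b : Q.A, ¬ List.Chain' (permPair Q P) (b :: l))

/-- Forbidden threads (trivial and non-trivial ones). -/
def IsForbThread (Q : Quiv) (P : Rels Q) : Pth Q → Prop
  | Sum.inl v => Fintype.card {a : Q.A // Q.src a = v} ≤ 1 ∧
      Fintype.card {a : Q.A // Q.tgt a = v} ≤ 1 ∧
      ∀ b c : Q.A, Q.tgt b = v → Q.src c = v → P b c
  | Sum.inr l => l ≠ [] ∧ l.Nodup ∧ List.Chain' (forbPair Q P) l ∧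
      (∀ b : Q.A, ¬ ((l ++ [b]).Nodup ∧ List.Chain' (forbPair Q P) (l ++ [b]))) ∧
      (∀ b : Q.A, ¬ ((b :: l).Nodup ∧ List.Chain' (forbPair Q P) (b :: l)))

/-- The axioms for the sign functions `σ, ε : Q₁ → {1,-1}`. -/
structure SgnOk (Q : Quiv) (P : Rels Q) (sg ep : Q.A → ℤ) : Prop where
  sg_pm : ∀ a : Q.A, sg a = 1 ∨ sg a = -1
  ep_pm : ∀ a : Q.A, ep a = 1 ∨ ep a = -1
  sg_opp : ∀ a b : Q.A, a ≠ b → Q.src a = Q.src b → sg a = - sg b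
  ep_opp : ∀ a b : Q.A, a ≠ b → Q.tgt a = Q.tgt b → ep a = - ep b
  comp : ∀ a b : Q.A, Q.tgt a = Q.src b → ¬ P a b → sg b = - ep a

/-- `σ` extended to permitted threads. -/
noncomputable def permSg (Q : Quiv) (sg ep : Q.A → ℤ) : Pth Q → Option ℤ
  | Sum.inl v =>
      if h : ∃ γ : Q.A, Q.src γ = v then some (-(sg h.choose))
      else if h2 : ∃ β : Q.A, Q.tgt β = v then some (ep h2.choose)
      else none
  | Sum.inr l => l.head?.map sg

/-- `ε` extended to permitted threads. -/
noncomputable def permEp (Q : Quiv) (sg ep : Q.A → ℤ) : Pth Q → Option ℤ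
  | Sum.inl v => (permSg Q sg ep (Sum.inl v)).map (fun x => -x)
  | Sum.inr l => l.getLast?.map ep

/-- `σ` extended to forbidden threads. -/
noncomputable def forbSg (Q : Quiv) (sg ep : Q.A → ℤ) : Pth Q → Option ℤ
  | Sum.inl v =>
      if h : ∃ γ : Q.A, Q.src γ = v then some (-(sg h.choose))
      else if h2 : ∃ β : Q.A, Q.tgt β = v then some (-(ep h2.choose))
      else none
  | Sum.inr l => l.head?.map sg

/-- `ε` extended to forbidden threads. -/
noncomputable def forbEp (Q : Quiv) (sg ep : Q.A → ℤ) : Pth Q → Option ℤ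
  | Sum.inl v => forbSg Q sg ep (Sum.inl v)
  | Sum.inr l => l.getLast?.map ep

/-- One step of the algorithm computing `φ_A`: from the permitted thread `H` one
passes backwards through the forbidden thread `Π` (of length `len`) ending at the
end of `H` with `ε(Π) = -ε(H)`, arriving at the permitted thread `H'` starting at
the start of `Π` with `σ(H') = -σ(Π)`. -/
noncomputable def AlgStep (Q : Quiv) (P : Rels Q) (sg ep : Q.A → ℤ)
    (H H' : Pth Q) (len : ℕ) : Prop :=
  IsPermThread Q P H ∧ IsPermThread Q P H' ∧
  ∃ Pi : Pth Q, IsForbThread Q P Pi ∧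
    thEnd Q Pi = thEnd Q H ∧
    forbEp Q sg ep Pi = (permEp Q sg ep H).map (fun x => -x) ∧
    thStart Q H' = thStart Q Pi ∧
    permSg Q sg ep H' = (forbSg Q sg ep Pi).map (fun x => -x) ∧
    len = thLen Q Pi

/-- The permitted thread `H` returns to itself for the first time after exactly `n`
steps of the algorithm, and the total length of the forbidden threads used is `m`. -/
noncomputable def CycleData (Q : Quiv) (P : Rels Q) (sg ep : Q.A → ℤ)
    (H : Pth Q) (n m : ℕ) : Prop :=
  0 < n ∧ IsPermThread Q P H ∧
  ∃ (f : ℕ → Pth Q) (g : ℕ → ℕ),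
    f 0 = H ∧ f n = H ∧
    (∀ i, i < n → AlgStep Q P sg ep (f i) (f (i + 1)) (g i)) ∧
    (∀ i, 0 < i → i < n → f i ≠ H) ∧
    m = ∑ i ∈ Finset.range n, g i

/-- A directed cycle in which each pair of (cyclically) consecutive arrows is a
relation; recorded as a nonempty duplicate-free list of arrows. -/
def IsRelCycle (Q : Quiv) (P : Rels Q) (l : List Q.A) : Prop :=
  l ≠ [] ∧ l.Nodup ∧ List.Chain' (forbPair Q P) l ∧
  ∃ a b : Q.A, l.head? = some a ∧ l.getLast? = some b ∧ Q.tgt b = Q.src a ∧ P b a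

/-- The derived invariant `φ_A : ℕ² → ℕ` of a gentle algebra `A = kQ/⟨P⟩`.
For `n ≥ 1`, `φ_A(n,m)` counts the cycles of the algorithm which use `n` permitted
threads and forbidden threads of total length `m` (each such cycle consists of `n`
permitted threads, whence the division); `φ_A(0,m)` counts the directed cycles of
length `m` in which any two consecutive arrows form a relation (counted up to
rotation: such a cycle of length `m` has exactly `m` rotations). -/
noncomputable def phi (Q : Quiv) (P : Rels Q) (sg ep : Q.A → ℤ) : ℕ × ℕ → ℕ :=
  fun p => match p with
  | (0, m) => Nat.card {l : List Q.A // IsRelCycle Q P l ∧ l.length = m} / m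
  | (n + 1, m) => Nat.card {H : Pth Q // CycleData Q P sg ep H (n + 1) m} / (n + 1)

/-- The Kronecker quiver: two vertices and two parallel arrows. -/
def IsKronecker (Q : Quiv) : Prop :=
  ∃ (v w : Q.V) (a b : Q.A), v ≠ w ∧ a ≠ b ∧ (∀ u : Q.V, u = v ∨ u = w) ∧
    (∀ c : Q.A, c = a ∨ c = b) ∧ (∀ c : Q.A, Q.src c = v ∧ Q.tgt c = w)

end GentlePaper

namespace GentlePaper

/-- Composition of paths: `pcomp Q C D` is the path `C∘D` ("first `D`, then `C`"),
or `none` if the paths are not composable. -/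
def pcomp (Q : Quiv) : Pth Q → Pth Q → Option (Pth Q)
  | Sum.inl v, Sum.inl w => if v = w then some (Sum.inl v) else none
  | Sum.inl v, Sum.inr l => if thEnd Q (Sum.inr l) = some v then some (Sum.inr l) else none
  | Sum.inr l, Sum.inl v => if thStart Q (Sum.inr l) = some v then some (Sum.inr l) else none
  | Sum.inr l, Sum.inr l' => some (Sum.inr (l' ++ l))

/-- The index set `Γ` of the canonical basis of `kQ/⟨P⟩`: residue classes of the
paths of `Q` not lying in `⟨P⟩`. -/
def Gam (Q : Quiv) (P : Rels Q) := {p : Pth Q // pthOk Q P p}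

/-- The trivial path `1_v` as an element of `Γ`. -/
def trivGam (Q : Quiv) (P : Rels Q) (v : Q.V) : Gam Q P := ⟨Sum.inl v, trivial⟩

/-- An arrow `a` as an element of `Γ`. -/
def arrGam (Q : Quiv) (P : Rels Q) (a : Q.A) : Gam Q P :=
  ⟨Sum.inr [a], ⟨List.cons_ne_nil a [], List.isChain_singleton a⟩⟩

/-- The basis vector attached to a path, or `0` if the path lies in `⟨P⟩`. -/
noncomputable def basImg {k : Type} [Field k] {Q : Quiv} {P : Rels Q} {A : Type}
    [Ring A] [Algebra k A] (bas : Module.Basis (Gam Q P) k A) (p : Pth Q) : A :=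
  if h : pthOk Q P p then bas ⟨p, h⟩ else 0

/-- A presentation of the `k`-algebra `A` as the path algebra `kQ/⟨P⟩`: a `k`-basis
indexed by the residue classes of nonzero paths, multiplying as paths do, with the
identity being the sum of the trivial paths.  An algebra admitting such a
presentation is precisely one isomorphic to `kQ/⟨P⟩`. -/
structure PathAlgPresentation (k : Type) [Field k] (Q : Quiv) (P : Rels Q)
    (A : Type) [Ring A] [Algebra k A] where
  bas : Module.Basis (Gam Q P) k A
  mul_bas : ∀ C D : Gam Q P,
    bas C * bas D = (pcomp Q C.1 D.1).elim 0 (basImg bas)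
  one_bas : (1 : A) = ∑ v : Q.V, bas (trivGam Q P v)

namespace PathAlgPresentation

variable {k : Type} [Field k] {Q : Quiv} {P : Rels Q} {A : Type} [Ring A] [Algebra k A]

/-- The idempotent `1_v` of the presented algebra. -/
noncomputable def e (pp : PathAlgPresentation k Q P A) (v : Q.V) : A :=
  pp.bas (trivGam Q P v)

/-- The coefficient `f_C(D)` of the basis element `C` in the expansion of `f(D)`. -/
noncomputable def coeff (pp : PathAlgPresentation k Q P A)
    (f : A ≃ₐ[k] A) (C D : Gam Q P) : k :=
  pp.bas.repr (f (pp.bas D)) C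

/-- Membership in `Aut^l(A)`: algebra automorphisms fixing all the `1_v`. -/
def MemAutL (pp : PathAlgPresentation k Q P A) (f : A ≃ₐ[k] A) : Prop :=
  ∀ v : Q.V, f (pp.e v) = pp.e v

/-- Membership in `Aut₊^l(A) = {f ∈ Aut^l(A) | f_α(α) ≠ 0 for all arrows α}`. -/
noncomputable def MemAutStar (pp : PathAlgPresentation k Q P A) (f : A ≃ₐ[k] A) : Prop :=
  pp.MemAutL f ∧ ∀ a : Q.A, pp.coeff f (arrGam Q P a) (arrGam Q P a) ≠ 0

/-- Membership in `S(Q₁)`: automorphisms in `Aut₊^l(A)` rescaling every arrow. -/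
noncomputable def MemSQ1 (pp : PathAlgPresentation k Q P A) (f : A ≃ₐ[k] A) : Prop :=
  pp.MemAutStar f ∧ ∀ a : Q.A, ∃ c : kˣ,
    f (pp.bas (arrGam Q P a)) = (c : k) • pp.bas (arrGam Q P a)

/-- Membership in `N(A) = {f ∈ Aut₊^l(A) | f_α(α) = 1 for all arrows α}`. -/
noncomputable def MemNA (pp : PathAlgPresentation k Q P A) (f : A ≃ₐ[k] A) : Prop :=
  pp.MemAutStar f ∧ ∀ a : Q.A, pp.coeff f (arrGam Q P a) (arrGam Q P a) = 1

/-- Membership of an element in the subalgebra `⊕_{v ∈ Q₀} 1_v A 1_v`. -/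
noncomputable def IsDiag (pp : PathAlgPresentation k Q P A) (x : A) : Prop :=
  (∑ v : Q.V, pp.e v * x * pp.e v) = x

/-- Membership in `Inn^l(A)`: inner automorphisms `ι_x` with `x` an invertible
element of `⊕_v 1_v A 1_v`. -/
noncomputable def MemInnL (pp : PathAlgPresentation k Q P A) (f : A ≃ₐ[k] A) : Prop :=
  ∃ x : Aˣ, pp.IsDiag (x : A) ∧ ∀ a : A, f a = (↑x⁻¹ : A) * a * (x : A)

/-- Membership in `Inn_S^l(A)`: inner automorphisms `ι_s`, `s = Σ_v c_v 1_v`, `c_v ∈ k*`. -/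
noncomputable def MemInnS (pp : PathAlgPresentation k Q P A) (f : A ≃ₐ[k] A) : Prop :=
  ∃ (c : Q.V → kˣ) (x : Aˣ), ((x : A) = ∑ v : Q.V, (c v : k) • pp.e v) ∧
    ∀ a : A, f a = (↑x⁻¹ : A) * a * (x : A)

/-- Membership in `Inn_N^l(A)`: inner automorphisms `ι_u`, `u = Σ_v (1_v + n_v)`,
with `n_v ∈ 1_v A 1_v` nilpotent. -/
noncomputable def MemInnN (pp : PathAlgPresentation k Q P A) (f : A ≃ₐ[k] A) : Prop :=
  ∃ (x : Aˣ) (n : Q.V → A), (∀ v : Q.V, IsNilpotent (n v)) ∧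
    (∀ v : Q.V, pp.e v * n v * pp.e v = n v) ∧
    ((x : A) = ∑ v : Q.V, (pp.e v + n v)) ∧
    ∀ a : A, f a = (↑x⁻¹ : A) * a * (x : A)

end PathAlgPresentation

end GentlePaper


namespace GentlePaper

open PathAlgPresentation


section Aux

variable {k : Type} [Field k] {Q : Quiv} {P : Rels Q} {A : Type} [Ring A] [Algebra k A]

/-! ### Path combinatorics -/

lemma pthOk_length_lt (hg : IsGentle Q P) :
    ∃ N : ℕ, 0 < N ∧ ∀ l : List Q.A, pthOk Q P (Sum.inr l) → l.length < N := by
  obtain ⟨N, hN⟩ := hg.bounded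
  have hN0 : 0 < N := by
    rcases Nat.eq_zero_or_pos N with h0 | h; swap
    · exact h
    · subst h0
      obtain ⟨l₁, a, b, l₂, heq, -⟩ := hN [] List.isChain_nil rfl
      cases l₁ <;> simp at heq
  refine ⟨N, hN0, ?_⟩
  intro l hl
  by_contra hle
  push_neg at hle
  have hpre : List.Chain' (permPair Q P) (l.take N) := by
    have : l.take N ++ l.drop N = l := List.take_append_drop N l
    have hch := hl.2
    rw [← this] at hch
    exact (List.isChain_append.mp hch).1
  have hcomp : List.Chain' (fun a b => Q.tgt a = Q.src b) (l.take N) :=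
    hpre.imp (fun _ _ hp => hp.1)
  obtain ⟨l₁, a, b, l₂, heq, hab⟩ := hN (l.take N) hcomp (by simp [hle])
  rw [heq] at hpre
  have : permPair Q P a b := by
    have h2 := (List.isChain_append.mp hpre).2.1
    exact (List.isChain_cons_cons.mp h2).1
  exact this.2 hab

lemma finite_gam (hg : IsGentle Q P) : Finite (Gam Q P) := by
  obtain ⟨N, -, hN⟩ := pthOk_length_lt hg
  have hfin : {p : Pth Q | pthOk Q P p}.Finite := by
    have hsub : {p : Pth Q | pthOk Q P p} ⊆
        Set.range (Sum.inl : Q.V → Pth Q) ∪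
          (Sum.inr '' {l : List Q.A | l.length < N}) := by
      rintro (v | l) hp
      · exact Or.inl ⟨v, rfl⟩
      · exact Or.inr ⟨l, hN l hp, rfl⟩
    exact Set.Finite.subset ((Set.finite_range _).union
      ((List.finite_length_lt Q.A N).image _)) hsub
  exact hfin.to_subtype

lemma chain'_repl {X : Type} {R : X → X → Prop} {x : X} (h : R x x) :
    ∀ n, List.Chain' R (List.replicate n x)
  | 0 => List.isChain_nil
  | 1 => List.isChain_singleton x
  | (n + 2) => by
    rw [List.replicate_succ, List.replicate_succ, List.Chain', List.isChain_cons_cons]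
    exact ⟨h, by rw [← List.replicate_succ]; exact chain'_repl h (n + 1)⟩

lemma loop_rel (hg : IsGentle Q P) (γ : Q.A) (hloop : Q.tgt γ = Q.src γ) : P γ γ := by
  obtain ⟨N, hN⟩ := hg.bounded
  obtain ⟨l₁, a, b, l₂, heq, hab⟩ :=
    hN (List.replicate N γ) (chain'_repl (R := fun a b => Q.tgt a = Q.src b) hloop N) List.length_replicate
  have ha : a = γ := by
    have : a ∈ List.replicate N γ := by rw [heq]; simp
    exact List.eq_of_mem_replicate this
  have hb : b = γ := by
    have : b ∈ List.replicate N γ := by rw [heq]; simp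
    exact List.eq_of_mem_replicate this
  subst ha; subst hb; exact hab

lemma three_pigeon {X : Type} [Fintype X] (h : Fintype.card X ≤ 2) (a b c : X) :
    a = b ∨ a = c ∨ b = c := by
  by_contra hcon
  push_neg at hcon
  exact absurd (Fintype.two_lt_card_iff.mpr ⟨a, b, c, hcon.1, hcon.2.1, hcon.2.2⟩)
    (by omega)

lemma src_two (hg : IsGentle Q P) {v : Q.V} {α β c : Q.A} (hne : α ≠ β)
    (hα : Q.src α = v) (hβ : Q.src β = v) (hc : Q.src c = v) : c = α ∨ c = β := by
  have := three_pigeon (hg.src_le_two v)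
    (⟨α, hα⟩ : {a : Q.A // Q.src a = v}) ⟨β, hβ⟩ ⟨c, hc⟩
  rcases this with h | h | h
  · exact absurd (congrArg Subtype.val h) hne
  · exact Or.inl (congrArg Subtype.val h).symm
  · exact Or.inr (congrArg Subtype.val h).symm

lemma tgt_two (hg : IsGentle Q P) {w : Q.V} {α β c : Q.A} (hne : α ≠ β)
    (hα : Q.tgt α = w) (hβ : Q.tgt β = w) (hc : Q.tgt c = w) : c = α ∨ c = β := by
  have := three_pigeon (hg.tgt_le_two w)
    (⟨α, hα⟩ : {a : Q.A // Q.tgt a = w}) ⟨β, hβ⟩ ⟨c, hc⟩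
  rcases this with h | h | h
  · exact absurd (congrArg Subtype.val h) hne
  · exact Or.inl (congrArg Subtype.val h).symm
  · exact Or.inr (congrArg Subtype.val h).symm

/-! ### Generic facts about `Gam` elements -/

lemma pcomp_thLen {p q r : Pth Q} (h : pcomp Q p q = some r) :
    thLen Q r = thLen Q p + thLen Q q := by
  rcases p with v | l <;> rcases q with w | m
  · simp only [pcomp] at h
    split_ifs at h
    cases h; simp [thLen]
  · simp only [pcomp] at h
    split_ifs at h
    cases h; simp [thLen]
  · simp only [pcomp] at h
    split_ifs at h
    cases h; simp [thLen]
  · simp only [pcomp] at h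
    cases h; simp [thLen, Nat.add_comm]

lemma len0_triv (C : Gam Q P) (h : thLen Q C.1 = 0) : ∃ u, C = trivGam Q P u := by
  obtain ⟨p, hp⟩ := C
  rcases p with v | l
  · exact ⟨v, Subtype.ext rfl⟩
  · simp only [thLen] at h
    exact absurd (List.length_eq_zero_iff.mp h) hp.1

lemma len1_arr (C : Gam Q P) (h : thLen Q C.1 = 1) : ∃ a, C = arrGam Q P a := by
  obtain ⟨p, hp⟩ := C
  rcases p with v | l
  · simp [thLen] at h
  · simp only [thLen] at h
    obtain ⟨a, rfl⟩ := List.length_eq_one_iff.mp h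
    exact ⟨a, Subtype.ext rfl⟩

lemma start_end_exists (C : Gam Q P) :
    ∃ v w, thStart Q C.1 = some v ∧ thEnd Q C.1 = some w := by
  obtain ⟨p, hp⟩ := C
  rcases p with u | l
  · exact ⟨u, u, rfl, rfl⟩
  · refine ⟨Q.src (l.head hp.1), Q.tgt (l.getLast hp.1), ?_, ?_⟩
    · simp [thStart, List.head?_eq_head hp.1]
    · simp [thEnd, List.getLast?_eq_getLast hp.1]

lemma arrGam_injective : Function.Injective (arrGam Q P) := by
  intro a b h
  have := congrArg Subtype.val h
  simp only [arrGam] at this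
  have h2 : [a] = [b] := Sum.inr_injective this
  simpa using h2

lemma thStart_arr (a : Q.A) : thStart Q (arrGam Q P a).1 = some (Q.src a) := by
  simp [arrGam, thStart]

lemma thEnd_arr (a : Q.A) : thEnd Q (arrGam Q P a).1 = some (Q.tgt a) := by
  simp [arrGam, thEnd]

lemma thLen_arr (a : Q.A) : thLen Q (arrGam Q P a).1 = 1 := rfl

end Aux
section Aux2

variable {k : Type} [Field k] {Q : Quiv} {P : Rels Q} {A : Type} [Ring A] [Algebra k A]
variable (pp : PathAlgPresentation k Q P A)

lemma basImg_pos (p : Pth Q) (hp : pthOk Q P p) :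
    basImg pp.bas p = pp.bas ⟨p, hp⟩ := dif_pos hp

lemma basImg_neg (p : Pth Q) (hp : ¬ pthOk Q P p) :
    basImg pp.bas p = 0 := dif_neg hp

lemma repr_bas_mul_bas (D E C : Gam Q P) :
    pp.bas.repr (pp.bas D * pp.bas E) C =
      if pcomp Q D.1 E.1 = some C.1 then 1 else 0 := by
  rw [pp.mul_bas]
  rcases h : pcomp Q D.1 E.1 with _ | p
  · simp
  · simp only [Option.elim]
    by_cases hok : pthOk Q P p
    · erw [basImg_pos pp p hok, Module.Basis.repr_self, Finsupp.single_apply]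
      by_cases hc : p = C.1
      · erw [if_pos (Subtype.ext hc), if_pos (congrArg some hc)]
      · erw [if_neg (fun (hh : (⟨p, hok⟩ : Gam Q P) = C) => hc (congrArg Subtype.val hh)),
          if_neg (fun hh => hc (Option.some_inj.mp hh))]
    · rw [basImg_neg pp p hok, map_zero]
      have hne : ¬ (some p = some C.1) := fun h' =>
        hok (by rw [Option.some_inj.mp h']; exact C.2)
      rw [if_neg hne, Finsupp.coe_zero, Pi.zero_apply]

lemma repr_mul [Fintype (Gam Q P)] (x y : A) (C : Gam Q P) :
    pp.bas.repr (x * y) C =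
      ∑ D : Gam Q P, ∑ E : Gam Q P, pp.bas.repr x D * pp.bas.repr y E *
        (if pcomp Q D.1 E.1 = some C.1 then 1 else 0) := by
  conv_lhs => rw [← pp.bas.sum_repr x, ← pp.bas.sum_repr y]
  rw [Finset.sum_mul_sum]
  have hterm : ∀ D E : Gam Q P,
      (pp.bas.repr x D • pp.bas D) * (pp.bas.repr y E • pp.bas E) =
        (pp.bas.repr x D * pp.bas.repr y E) • (pp.bas D * pp.bas E) := by
    intro D E
    rw [smul_mul_assoc, mul_smul_comm, smul_smul]
  simp only [hterm]
  rw [map_sum, Finsupp.finset_sum_apply]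
  refine Finset.sum_congr rfl (fun D _ => ?_)
  rw [map_sum, Finsupp.finset_sum_apply]
  refine Finset.sum_congr rfl (fun E _ => ?_)
  rw [map_smul, Finsupp.smul_apply, repr_bas_mul_bas pp D E C, smul_eq_mul, mul_assoc]

lemma e_mul_bas (w : Q.V) (C : Gam Q P) :
    pp.e w * pp.bas C = if thEnd Q C.1 = some w then pp.bas C else 0 := by
  show pp.bas (trivGam Q P w) * pp.bas C = _
  rw [pp.mul_bas]
  obtain ⟨p, hp⟩ := C
  rcases p with u | l
  · show (if w = u then some (Sum.inl w : Pth Q) else none).elim 0 (basImg pp.bas) = _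
    by_cases h : w = u
    · subst h
      rw [if_pos rfl]
      have hok : pthOk Q P (Sum.inl w : Pth Q) := trivial
      show basImg pp.bas (Sum.inl w) =
        if thEnd Q (Sum.inl w : Pth Q) = some w then pp.bas ⟨Sum.inl w, hp⟩ else 0
      rw [basImg_pos pp _ hok,
        if_pos (show thEnd Q (Sum.inl w : Pth Q) = some w from rfl)]
    · rw [if_neg h]
      have : ¬ (some u = some w) := fun hh => h (Option.some_inj.mp hh).symm
      simp [thEnd, this]; rfl
  · show (if thEnd Q (Sum.inr l) = some w then some (Sum.inr l : Pth Q) else none).elim 0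
      (basImg pp.bas) = _
    split_ifs with h
    · simp only [Option.elim]
      rw [basImg_pos pp _ hp]
    · rfl

lemma bas_mul_e (v : Q.V) (C : Gam Q P) :
    pp.bas C * pp.e v = if thStart Q C.1 = some v then pp.bas C else 0 := by
  show pp.bas C * pp.bas (trivGam Q P v) = _
  rw [pp.mul_bas]
  obtain ⟨p, hp⟩ := C
  rcases p with u | l
  · show (if u = v then some (Sum.inl u : Pth Q) else none).elim 0 (basImg pp.bas) = _
    by_cases h : u = v
    · subst h
      rw [if_pos rfl]
      have hok : pthOk Q P (Sum.inl u : Pth Q) := trivial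
      show basImg pp.bas (Sum.inl u) =
        if thStart Q (Sum.inl u : Pth Q) = some u then pp.bas ⟨Sum.inl u, hp⟩ else 0
      rw [basImg_pos pp _ hok,
        if_pos (show thStart Q (Sum.inl u : Pth Q) = some u from rfl)]
    · rw [if_neg h]
      have : ¬ (some u = some v) := fun hh => h (Option.some_inj.mp hh)
      simp [thStart, this]; rfl
  · show (if thStart Q (Sum.inr l) = some v then some (Sum.inr l : Pth Q) else none).elim 0
      (basImg pp.bas) = _
    split_ifs with h
    · simp only [Option.elim]
      rw [basImg_pos pp _ hp]
    · rfl

lemma bas_sandwich (v w : Q.V) (C : Gam Q P) :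
    pp.e w * pp.bas C * pp.e v =
      if thStart Q C.1 = some v ∧ thEnd Q C.1 = some w then pp.bas C else 0 := by
  rw [mul_assoc, bas_mul_e]
  by_cases h1 : thStart Q C.1 = some v
  · rw [if_pos h1, e_mul_bas]
    by_cases h2 : thEnd Q C.1 = some w
    · rw [if_pos h2, if_pos ⟨h1, h2⟩]
    · rw [if_neg h2, if_neg (fun hh => h2 hh.2)]
  · rw [if_neg h1, mul_zero, if_neg (fun hh => h1 hh.1)]

lemma repr_sandwich [Fintype (Gam Q P)] (v w : Q.V) (x : A) (C : Gam Q P) :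
    pp.bas.repr (pp.e w * x * pp.e v) C =
      if thStart Q C.1 = some v ∧ thEnd Q C.1 = some w then pp.bas.repr x C else 0 := by
  conv_lhs => rw [← pp.bas.sum_repr x]
  rw [Finset.mul_sum, Finset.sum_mul]
  have hterm : ∀ D : Gam Q P,
      (pp.e w * (pp.bas.repr x D • pp.bas D)) * pp.e v =
        pp.bas.repr x D • (pp.e w * pp.bas D * pp.e v) := by
    intro D
    rw [mul_smul_comm, smul_mul_assoc]
  simp only [hterm, bas_sandwich]
  rw [map_sum, Finsupp.finset_sum_apply]
  rw [Finset.sum_eq_single C]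
  · rw [map_smul, Finsupp.smul_apply]
    split_ifs with h
    · rw [Module.Basis.repr_self, Finsupp.single_apply, if_pos rfl, smul_eq_mul, mul_one]
    · rw [map_zero]
      simp
  · intro D _ hne
    rw [map_smul, Finsupp.smul_apply]
    split_ifs with h
    · rw [Module.Basis.repr_self, Finsupp.single_apply, if_neg hne, smul_eq_mul, mul_zero]
    · rw [map_zero]
      simp
  · intro h
    exact absurd (Finset.mem_univ _) h

end Aux2
section Aux3

variable {k : Type} [Field k] {Q : Quiv} {P : Rels Q} {A : Type} [Ring A] [Algebra k A]
variable (pp : PathAlgPresentation k Q P A)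

lemma memAutL_repr_endpoints [Fintype (Gam Q P)] {f : A ≃ₐ[k] A} (hf : pp.MemAutL f)
    (C D : Gam Q P) (h : pp.bas.repr (f (pp.bas C)) D ≠ 0) :
    thStart Q D.1 = thStart Q C.1 ∧ thEnd Q D.1 = thEnd Q C.1 := by
  obtain ⟨v, w, h1, h2⟩ := start_end_exists C
  have hC : pp.e w * pp.bas C * pp.e v = pp.bas C := by
    rw [bas_sandwich, if_pos ⟨h1, h2⟩]
  have hfC : f (pp.bas C) = pp.e w * f (pp.bas C) * pp.e v := by
    conv_lhs => rw [← hC]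
    rw [map_mul, map_mul, hf v, hf w]
  rw [hfC, repr_sandwich] at h
  by_cases hm : thStart Q D.1 = some v ∧ thEnd Q D.1 = some w
  · exact ⟨hm.1.trans h1.symm, hm.2.trans h2.symm⟩
  · rw [if_neg hm] at h
    exact absurd rfl h

lemma repr_triv_mul [Fintype (Gam Q P)] (u : Q.V) (x y : A) :
    pp.bas.repr (x * y) (trivGam Q P u) =
      pp.bas.repr x (trivGam Q P u) * pp.bas.repr y (trivGam Q P u) := by
  rw [repr_mul]
  have key : ∀ D E : Gam Q P, pcomp Q D.1 E.1 = some (Sum.inl u) →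
      D = trivGam Q P u ∧ E = trivGam Q P u := by
    intro D E h
    have hlen := pcomp_thLen h
    rw [show thLen Q (Sum.inl u : Pth Q) = 0 from rfl] at hlen
    have hD0 : thLen Q D.1 = 0 := by omega
    have hE0 : thLen Q E.1 = 0 := by omega
    obtain ⟨u1, rfl⟩ := len0_triv D hD0
    obtain ⟨u2, rfl⟩ := len0_triv E hE0
    simp only [pcomp, trivGam] at h
    split_ifs at h with h12
    · subst h12
      have : u1 = u := by
        have := Option.some_inj.mp h
        exact Sum.inl_injective this
      subst this
      exact ⟨rfl, rfl⟩
  rw [Finset.sum_eq_single (trivGam Q P u)]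
  · rw [Finset.sum_eq_single (trivGam Q P u)]
    · have : pcomp Q (trivGam Q P u).1 (trivGam Q P u).1 = some ((trivGam Q P u).1) := by
        simp [pcomp, trivGam]
      rw [show (trivGam Q P u).1 = (Sum.inl u : Pth Q) from rfl] at this ⊢
      rw [if_pos this, mul_one]
    · intro E _ hne
      split_ifs with h
      · exact absurd (key _ _ h).2 hne
      · rw [mul_zero]
    · intro h; exact absurd (Finset.mem_univ _) h
  · intro D _ hne
    refine Finset.sum_eq_zero (fun E _ => ?_)
    split_ifs with h
    · exact absurd (key _ _ h).1 hne
    · rw [mul_zero]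
  · intro h; exact absurd (Finset.mem_univ _) h

/-- Iterated concatenation. -/
def repList {X : Type} (l : List X) : ℕ → List X
  | 0 => l
  | (n + 1) => l ++ repList l n

lemma repList_length {X : Type} (l : List X) (n : ℕ) :
    (repList l n).length = (n + 1) * l.length := by
  induction n with
  | zero => simp [repList]
  | succ n ih => simp [repList, ih]; ring

lemma repList_ne_nil {X : Type} {l : List X} (hl : l ≠ []) (n : ℕ) :
    repList l n ≠ [] := by
  cases n <;> simp [repList, hl]

lemma bas_pos_mul (l m : List Q.A) (hm : m ≠ []) (hl : pthOk Q P (Sum.inr l)) :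
    basImg pp.bas (Sum.inr m) * pp.bas ⟨Sum.inr l, hl⟩ = basImg pp.bas (Sum.inr (l ++ m)) := by
  by_cases hok : pthOk Q P (Sum.inr m)
  · rw [basImg_pos pp _ hok]
    erw [pp.mul_bas]
    rfl
  · rw [basImg_neg pp _ hok, zero_mul]
    have : ¬ pthOk Q P (Sum.inr (l ++ m)) := by
      rintro ⟨-, hch⟩
      exact hok ⟨hm, (List.isChain_append.mp hch).2.1⟩
    rw [basImg_neg pp _ this]

lemma bas_pow (l : List Q.A) (hl : pthOk Q P (Sum.inr l)) (n : ℕ) :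
    (pp.bas ⟨Sum.inr l, hl⟩) ^ (n + 1) = basImg pp.bas (Sum.inr (repList l n)) := by
  induction n with
  | zero => rw [pow_one, show repList l 0 = l from rfl, basImg_pos pp _ hl]
  | succ n ih =>
    rw [pow_succ, ih, bas_pos_mul pp l (repList l n) (repList_ne_nil hl.1 n) hl]
    rfl

lemma bas_pos_nilpotent (hg : IsGentle Q P) (l : List Q.A) (hl : pthOk Q P (Sum.inr l)) :
    ∃ n : ℕ, n ≠ 0 ∧ (pp.bas ⟨Sum.inr l, hl⟩) ^ n = 0 := by
  obtain ⟨N, hN0, hN⟩ := pthOk_length_lt hg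
  refine ⟨N + 1, by omega, ?_⟩
  rw [bas_pow]
  apply basImg_neg
  intro hok
  have h1 := hN _ hok
  rw [repList_length] at h1
  have h2 : 1 ≤ l.length := List.length_pos_iff.mpr hl.1
  have h3 : (N + 1) * 1 ≤ (N + 1) * l.length := Nat.mul_le_mul_left _ h2
  omega

lemma repr_triv_pow [Fintype (Gam Q P)] (u : Q.V) (x : A) (n : ℕ) :
    pp.bas.repr x (trivGam Q P u) ^ (n + 1) = pp.bas.repr (x ^ (n + 1)) (trivGam Q P u) := by
  induction n with
  | zero => rw [pow_one, pow_one]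
  | succ n ih =>
    rw [pow_succ _ (n + 1), ih, ← repr_triv_mul pp u (x ^ (n + 1)) x, ← pow_succ]

lemma f_pos_triv [Fintype (Gam Q P)] (hg : IsGentle Q P) {f : A ≃ₐ[k] A}
    (hf : pp.MemAutL f) (C : Gam Q P) (hC : thLen Q C.1 ≠ 0) (u : Q.V) :
    pp.bas.repr (f (pp.bas C)) (trivGam Q P u) = 0 := by
  by_cases hend : thStart Q C.1 = some u ∧ thEnd Q C.1 = some u
  · obtain ⟨p, hp⟩ := C
    rcases p with v | l
    · simp [thLen] at hC
    · obtain ⟨n, hn0, hpow⟩ := bas_pos_nilpotent pp hg l hp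
      obtain ⟨m, rfl⟩ := Nat.exists_eq_succ_of_ne_zero hn0
      have hz : (f (pp.bas ⟨Sum.inr l, hp⟩)) ^ (m + 1) = 0 := by
        rw [← map_pow, hpow, map_zero]
      have := repr_triv_pow pp u (f (pp.bas ⟨Sum.inr l, hp⟩)) m
      rw [hz, map_zero] at this
      have h0 : pp.bas.repr (f (pp.bas ⟨Sum.inr l, hp⟩)) (trivGam Q P u) ^ (m + 1) = 0 := by
        rw [this]; simp
      exact pow_eq_zero_iff (by omega) |>.mp h0
  · by_contra h
    obtain ⟨h1, h2⟩ := memAutL_repr_endpoints pp hf C (trivGam Q P u) h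
    exact hend ⟨h1.symm, h2.symm⟩

lemma mul_low [Fintype (Gam Q P)] (x y : A)
    (hx : ∀ u, pp.bas.repr x (trivGam Q P u) = 0)
    (hy : ∀ u, pp.bas.repr y (trivGam Q P u) = 0)
    (C : Gam Q P) (hC : thLen Q C.1 ≤ 1) : pp.bas.repr (x * y) C = 0 := by
  rw [repr_mul]
  refine Finset.sum_eq_zero (fun D _ => Finset.sum_eq_zero (fun E _ => ?_))
  split_ifs with h
  · have hlen := pcomp_thLen h
    have : thLen Q D.1 = 0 ∨ thLen Q E.1 = 0 := by omega
    rcases this with h0 | h0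
    · obtain ⟨u, rfl⟩ := len0_triv D h0
      rw [hx u, zero_mul, zero_mul]
    · obtain ⟨u, rfl⟩ := len0_triv E h0
      rw [hy u, mul_zero, zero_mul]
  · rw [mul_zero]

lemma bas_cons (a : Q.A) (t : List Q.A) (hp : pthOk Q P (Sum.inr (a :: t)))
    (hpt : pthOk Q P (Sum.inr t)) :
    pp.bas ⟨Sum.inr (a :: t), hp⟩ = pp.bas ⟨Sum.inr t, hpt⟩ * pp.bas (arrGam Q P a) := by
  erw [pp.mul_bas]
  show _ = basImg pp.bas (Sum.inr ([a] ++ t))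
  rw [basImg_pos pp _ (show pthOk Q P (Sum.inr ([a] ++ t)) from hp)]
  rfl

lemma f_long [Fintype (Gam Q P)] (hg : IsGentle Q P) {f : A ≃ₐ[k] A}
    (hf : pp.MemAutL f) (C : Gam Q P) (hC : 2 ≤ thLen Q C.1)
    (D : Gam Q P) (hD : thLen Q D.1 ≤ 1) :
    pp.bas.repr (f (pp.bas C)) D = 0 := by
  obtain ⟨p, hp⟩ := C
  rcases p with v | l
  · simp [thLen] at hC
  · obtain ⟨a, t, rfl⟩ := List.exists_cons_of_ne_nil hp.1
    have ht : t ≠ [] := by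
      intro h
      subst h
      simp [thLen] at hC
    have hpt : pthOk Q P (Sum.inr t) := ⟨ht, hp.2.tail⟩
    rw [bas_cons pp a t hp hpt, map_mul]
    refine mul_low pp _ _ (fun u => f_pos_triv pp hg hf _ ?_ u)
      (fun u => f_pos_triv pp hg hf _ ?_ u) D hD
    · simp [thLen, ht]
    · simp [arrGam, thLen]

lemma comp_coeff [Fintype (Gam Q P)] (hg : IsGentle Q P) {f g : A ≃ₐ[k] A}
    (hf : pp.MemAutL f) (hgg : pp.MemAutL g) (α δ : Q.A) :
    pp.bas.repr (f (g (pp.bas (arrGam Q P α)))) (arrGam Q P δ) =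
      ∑ ρ : Q.A, pp.bas.repr (g (pp.bas (arrGam Q P α))) (arrGam Q P ρ) *
        pp.bas.repr (f (pp.bas (arrGam Q P ρ))) (arrGam Q P δ) := by
  conv_lhs => rw [← pp.bas.sum_repr (g (pp.bas (arrGam Q P α)))]
  rw [map_sum, map_sum, Finsupp.finset_sum_apply]
  simp only [map_smul, Finsupp.smul_apply, smul_eq_mul]
  have hzero : ∀ D ∈ Finset.univ, (D ∉ Finset.univ.image (arrGam Q P)) →
      pp.bas.repr (g (pp.bas (arrGam Q P α))) D *
        pp.bas.repr (f (pp.bas D)) (arrGam Q P δ) = 0 := by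
    intro D _ hD
    rcases Nat.lt_or_ge (thLen Q D.1) 2 with hlt | hge
    · interval_cases h : thLen Q D.1
      · obtain ⟨u, rfl⟩ := len0_triv D h
        rw [f_pos_triv pp hg hgg _ (by simp [arrGam, thLen]) u, zero_mul]
      · obtain ⟨a, rfl⟩ := len1_arr D h
        exact absurd (Finset.mem_image.mpr ⟨a, Finset.mem_univ a, rfl⟩) hD
    · rw [f_long pp hg hf D hge _ (by simp [arrGam, thLen]), mul_zero]
  rw [← Finset.sum_subset (Finset.subset_univ (Finset.univ.image (arrGam Q P))) hzero]
  rw [Finset.sum_image (fun a _ b _ h => arrGam_injective h)]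

lemma coeff_two [Fintype (Gam Q P)] (x y : A)
    (hx : ∀ u, pp.bas.repr x (trivGam Q P u) = 0)
    (hy : ∀ u, pp.bas.repr y (trivGam Q P u) = 0)
    (b c : Q.A) (h2 : pthOk Q P (Sum.inr [b, c])) :
    pp.bas.repr (x * y) ⟨Sum.inr [b, c], h2⟩ =
      pp.bas.repr x (arrGam Q P c) * pp.bas.repr y (arrGam Q P b) := by
  erw [repr_mul]
  have key : ∀ D E : Gam Q P, pcomp Q D.1 E.1 = some (Sum.inr [b, c]) →
      (∃ u, D = trivGam Q P u) ∨ (∃ u, E = trivGam Q P u) ∨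
        (D = arrGam Q P c ∧ E = arrGam Q P b) := by
    intro D E h
    obtain ⟨pD, hpD⟩ := D
    obtain ⟨pE, hpE⟩ := E
    rcases pD with u | l <;> rcases pE with u' | m
    · exact Or.inl ⟨u, Subtype.ext rfl⟩
    · exact Or.inl ⟨u, Subtype.ext rfl⟩
    · exact Or.inr (Or.inl ⟨u', Subtype.ext rfl⟩)
    · refine Or.inr (Or.inr ?_)
      simp only [pcomp] at h
      have hml : m ++ l = [b, c] := Sum.inr_injective (Option.some_inj.mp h)
      have hlen : m.length + l.length = 2 := by
        have := congrArg List.length hml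
        simpa using this
      have hm1 : m.length = 1 := by
        have h1 : 1 ≤ m.length := List.length_pos_iff.mpr hpE.1
        have h2' : 1 ≤ l.length := List.length_pos_iff.mpr hpD.1
        omega
      have hl1 : l.length = 1 := by omega
      obtain ⟨mb, rfl⟩ := List.length_eq_one_iff.mp hm1
      obtain ⟨lc, rfl⟩ := List.length_eq_one_iff.mp hl1
      have : mb = b ∧ lc = c := by
        have := hml
        simp at this
        exact this
      obtain ⟨rfl, rfl⟩ := this
      exact ⟨Subtype.ext rfl, Subtype.ext rfl⟩
  rw [Finset.sum_eq_single (arrGam Q P c)]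
  · rw [Finset.sum_eq_single (arrGam Q P b)]
    · have hpc : pcomp Q (arrGam Q P c).1 (arrGam Q P b).1 =
          some (Sum.inr [b, c] : Pth Q) := rfl
      erw [if_pos hpc, mul_one]
    · intro E _ hne
      split_ifs with h
      · rcases key _ _ h with ⟨u, hD⟩ | ⟨u, hE⟩ | ⟨-, hE⟩
        · exact absurd (congrArg Subtype.val hD) (by simp [arrGam, trivGam])
        · rw [hE, hy u, mul_zero, zero_mul]
        · exact absurd hE hne
      · rw [mul_zero]
    · intro h; exact absurd (Finset.mem_univ _) h
  · intro D _ hne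
    refine Finset.sum_eq_zero (fun E _ => ?_)
    split_ifs with h
    · rcases key _ _ h with ⟨u, hD⟩ | ⟨u, hE⟩ | ⟨hD, -⟩
      · rw [hD, hx u, zero_mul, zero_mul]
      · rw [hE, hy u, mul_zero, zero_mul]
      · exact absurd hD hne
    · rw [mul_zero]
  · intro h; exact absurd (Finset.mem_univ _) h

end Aux3
section Aux4

variable {k : Type} [Field k] {Q : Quiv} {P : Rels Q} {A : Type} [Ring A] [Algebra k A]
variable (pp : PathAlgPresentation k Q P A)

lemma coeff_def (f : A ≃ₐ[k] A) (C D : Gam Q P) :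
    pp.coeff f C D = pp.bas.repr (f (pp.bas D)) C := rfl

lemma f_triv_coeffs [Fintype (Gam Q P)] (hg : IsGentle Q P) {f : A ≃ₐ[k] A}
    (hf : pp.MemAutL f) (a : Q.A) (u : Q.V) :
    pp.bas.repr (f (pp.bas (arrGam Q P a))) (trivGam Q P u) = 0 :=
  f_pos_triv pp hg hf _ (by simp [arrGam, thLen]) u

lemma bas_arr_sq_zero {α γ : Q.A} (hrel : P α γ) {f : A ≃ₐ[k] A} :
    f (pp.bas (arrGam Q P γ)) * f (pp.bas (arrGam Q P α)) = 0 := by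
  rw [← map_mul, pp.mul_bas]
  have hnot : ¬ pthOk Q P (Sum.inr ([α] ++ [γ])) := by
    rintro ⟨-, hch⟩
    exact (List.isChain_cons_cons.mp hch).1.2 hrel
  show f (basImg pp.bas (Sum.inr ([α] ++ [γ]))) = 0
  rw [basImg_neg pp _ hnot, map_zero]

lemma pthOk_pair {b c : Q.A} (hcomp : Q.tgt b = Q.src c) (hnrel : ¬ P b c) :
    pthOk Q P (Sum.inr [b, c]) :=
  ⟨by simp, List.isChain_cons_cons.mpr ⟨⟨hcomp, hnrel⟩, List.isChain_singleton _⟩⟩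

/-- Uniform triangularity: for a pair of distinct parallel arrows, at least one of
the two off-diagonal coefficients vanishes for *every* automorphism in `Aut₊ˡ(A)`,
with a direction depending only on the quiver. -/
lemma triang [Fintype (Gam Q P)] (hg : IsGentle Q P) (hc : Connected Q)
    (hnk : ¬ IsKronecker Q) {α β : Q.A} (hne : α ≠ β)
    (hs : Q.src α = Q.src β) (ht : Q.tgt α = Q.tgt β) :
    (∀ f : A ≃ₐ[k] A, pp.MemAutStar f → pp.coeff f (arrGam Q P β) (arrGam Q P α) = 0) ∨
    (∀ f : A ≃ₐ[k] A, pp.MemAutStar f → pp.coeff f (arrGam Q P α) (arrGam Q P β) = 0) := by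
  by_cases hloop : Q.tgt α = Q.src α
  · -- parallel loops
    left
    intro f hf
    have hPαα : P α α := loop_rel hg α hloop
    have hnPβα : ¬ P β α := fun h => hne (hg.rel_pred_unique α α β hPαα h)
    have h2 : pthOk Q P (Sum.inr [β, α]) :=
      pthOk_pair (by rw [← ht]; exact hloop) hnPβα
    have hcoef := coeff_two pp (f (pp.bas (arrGam Q P α))) (f (pp.bas (arrGam Q P α)))
      (f_triv_coeffs pp hg hf.1 α) (f_triv_coeffs pp hg hf.1 α) β α h2
    erw [bas_arr_sq_zero pp hPαα, map_zero, Finsupp.coe_zero, Pi.zero_apply] at hcoef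
    rw [coeff_def]
    exact ((mul_eq_zero.mp hcoef.symm).resolve_left (hf.2 α))
  · by_cases hγ : ∃ γ : Q.A, Q.src γ = Q.tgt α
    · obtain ⟨γ, hγs⟩ := hγ
      by_cases hPαγ : P α γ
      · left
        intro f hf
        have hnPβγ : ¬ P β γ := fun h => hne (hg.rel_pred_unique γ α β hPαγ h)
        have h2 : pthOk Q P (Sum.inr [β, γ]) :=
          pthOk_pair (by rw [← ht]; exact hγs.symm) hnPβγ
        have hcoef := coeff_two pp (f (pp.bas (arrGam Q P γ))) (f (pp.bas (arrGam Q P α)))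
          (f_triv_coeffs pp hg hf.1 γ) (f_triv_coeffs pp hg hf.1 α) β γ h2
        erw [bas_arr_sq_zero pp hPαγ, map_zero, Finsupp.coe_zero, Pi.zero_apply] at hcoef
        rw [coeff_def]
        exact ((mul_eq_zero.mp hcoef.symm).resolve_left (hf.2 γ))
      · have hPβγ : P β γ := by
          by_contra h
          exact hne (hg.nonrel_pred_unique γ α β hγs.symm (by rw [← ht]; exact hγs.symm)
            hPαγ h)
        right
        intro f hf
        have h2 : pthOk Q P (Sum.inr [α, γ]) := pthOk_pair hγs.symm hPαγ
        have hcoef := coeff_two pp (f (pp.bas (arrGam Q P γ))) (f (pp.bas (arrGam Q P β)))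
          (f_triv_coeffs pp hg hf.1 γ) (f_triv_coeffs pp hg hf.1 β) α γ h2
        erw [bas_arr_sq_zero pp hPβγ, map_zero, Finsupp.coe_zero, Pi.zero_apply] at hcoef
        rw [coeff_def]
        exact ((mul_eq_zero.mp hcoef.symm).resolve_left (hf.2 γ))
    · by_cases hδ : ∃ δ : Q.A, Q.tgt δ = Q.src α
      · obtain ⟨δ, hδt⟩ := hδ
        by_cases hPδα : P δ α
        · left
          intro f hf
          have hnPδβ : ¬ P δ β := fun h => hne (hg.rel_succ_unique δ α β hPδα h)
          have h2 : pthOk Q P (Sum.inr [δ, β]) :=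
            pthOk_pair (hδt.trans hs) hnPδβ
          have hcoef := coeff_two pp (f (pp.bas (arrGam Q P α))) (f (pp.bas (arrGam Q P δ)))
            (f_triv_coeffs pp hg hf.1 α) (f_triv_coeffs pp hg hf.1 δ) δ β h2
          erw [bas_arr_sq_zero pp hPδα, map_zero, Finsupp.coe_zero, Pi.zero_apply] at hcoef
          rw [coeff_def]
          exact ((mul_eq_zero.mp hcoef.symm).resolve_right (hf.2 δ))
        · have hPδβ : P δ β := by
            by_contra h
            exact hne (hg.nonrel_succ_unique δ α β hδt.symm (hs.symm.trans hδt.symm) hPδα h)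
          right
          intro f hf
          have h2 : pthOk Q P (Sum.inr [δ, α]) := pthOk_pair hδt hPδα
          have hcoef := coeff_two pp (f (pp.bas (arrGam Q P β))) (f (pp.bas (arrGam Q P δ)))
            (f_triv_coeffs pp hg hf.1 β) (f_triv_coeffs pp hg hf.1 δ) δ α h2
          erw [bas_arr_sq_zero pp hPδβ, map_zero, Finsupp.coe_zero, Pi.zero_apply] at hcoef
          rw [coeff_def]
          exact ((mul_eq_zero.mp hcoef.symm).resolve_right (hf.2 δ))
      · exfalso
        apply hnk
        rw [not_exists] at hγ hδ
        have hvw : Q.src α ≠ Q.tgt α := fun h => hloop h.symm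
        have hsrcv : ∀ c : Q.A, Q.src c = Q.src α → c = α ∨ c = β :=
          fun c hc => src_two hg hne rfl hs.symm hc
        have htgtw : ∀ c : Q.A, Q.tgt c = Q.tgt α → c = α ∨ c = β :=
          fun c hc => tgt_two hg hne rfl ht.symm hc
        have hvert : ∀ u : Q.V, u = Q.src α ∨ u = Q.tgt α := by
          intro u
          have hrt := hc.2 (Q.src α) u
          induction hrt with
          | refl => exact Or.inl rfl
          | tail hrt' hstep ih =>
            rename_i x y
            obtain ⟨a, hcase⟩ := hstep
            rcases ih with hx | hx
            · rcases hcase with ⟨ha1, ha2⟩ | ⟨ha1, ha2⟩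
              · rcases hsrcv a (ha1.trans hx) with rfl | rfl
                · exact Or.inr ha2.symm
                · exact Or.inr (ha2.symm.trans ht.symm)
              · exact absurd (ha2.trans hx) (hδ a)
            · rcases hcase with ⟨ha1, ha2⟩ | ⟨ha1, ha2⟩
              · exact absurd (ha1.trans hx) (hγ a)
              · rcases htgtw a (ha2.trans hx) with rfl | rfl
                · exact Or.inl ha1.symm
                · exact Or.inl (ha1.symm.trans hs.symm)
        have harr : ∀ c : Q.A, Q.src c = Q.src α ∧ Q.tgt c = Q.tgt α := by
          intro c
          rcases hvert (Q.src c) with h | h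
          · refine ⟨h, ?_⟩
            rcases hsrcv c h with rfl | rfl
            · rfl
            · exact ht.symm
          · exact absurd h (hγ c)
        exact ⟨Q.src α, Q.tgt α, α, β, hvw, hne, hvert,
          fun c => hsrcv c (harr c).1, harr⟩

lemma nonpar_zero [Fintype (Gam Q P)] {h : A ≃ₐ[k] A} (hh : pp.MemAutL h)
    {τ ρ : Q.A} (hnp : ¬ (Q.src ρ = Q.src τ ∧ Q.tgt ρ = Q.tgt τ)) :
    pp.bas.repr (h (pp.bas (arrGam Q P τ))) (arrGam Q P ρ) = 0 := by
  by_contra hcon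
  obtain ⟨h1, h2⟩ := memAutL_repr_endpoints pp hh _ _ hcon
  rw [thStart_arr, thStart_arr] at h1
  rw [thEnd_arr, thEnd_arr] at h2
  exact hnp ⟨Option.some_inj.mp h1, Option.some_inj.mp h2⟩

lemma mul_diag [Fintype (Gam Q P)] (hg : IsGentle Q P) (hc : Connected Q)
    (hnk : ¬ IsKronecker Q) {f g : A ≃ₐ[k] A}
    (hf : pp.MemAutStar f) (hgg : pp.MemAutStar g) (α : Q.A) :
    pp.coeff (f * g) (arrGam Q P α) (arrGam Q P α) =
      pp.coeff f (arrGam Q P α) (arrGam Q P α) *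
        pp.coeff g (arrGam Q P α) (arrGam Q P α) := by
  rw [coeff_def, AlgEquiv.mul_apply, comp_coeff pp hg hf.1 hgg.1 α α]
  rw [Finset.sum_eq_single α]
  · exact mul_comm _ _
  · intro ρ _ hρ
    by_cases hpar : Q.src ρ = Q.src α ∧ Q.tgt ρ = Q.tgt α
    · rcases triang pp hg hc hnk (show α ≠ ρ from fun h => hρ h.symm)
        hpar.1.symm hpar.2.symm with hT | hT
      · rw [show pp.bas.repr (g (pp.bas (arrGam Q P α))) (arrGam Q P ρ) =
          pp.coeff g (arrGam Q P ρ) (arrGam Q P α) from rfl, hT g hgg, zero_mul]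
      · rw [show pp.bas.repr (f (pp.bas (arrGam Q P ρ))) (arrGam Q P α) =
          pp.coeff f (arrGam Q P α) (arrGam Q P ρ) from rfl, hT f hf, mul_zero]
    · rw [nonpar_zero pp hgg.1 hpar, zero_mul]
  · intro h; exact absurd (Finset.mem_univ _) h

lemma memAutL_inv {f : A ≃ₐ[k] A} (hf : pp.MemAutL f) : pp.MemAutL f⁻¹ := by
  intro v
  conv_lhs => rw [← hf v]
  rw [← AlgEquiv.mul_apply, inv_mul_cancel, AlgEquiv.one_apply]

lemma id_coeff (C D : Gam Q P) :
    pp.bas.repr ((1 : A ≃ₐ[k] A) (pp.bas D)) C = if D = C then 1 else 0 := by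
  rw [AlgEquiv.one_apply, Module.Basis.repr_self, Finsupp.single_apply]

lemma inv_diag [Fintype (Gam Q P)] (hg : IsGentle Q P) (hc : Connected Q)
    (hnk : ¬ IsKronecker Q) {f : A ≃ₐ[k] A} (hf : pp.MemAutStar f) (α : Q.A) :
    pp.coeff f⁻¹ (arrGam Q P α) (arrGam Q P α) *
      pp.coeff f (arrGam Q P α) (arrGam Q P α) = 1 := by
  have hfi : pp.MemAutL f⁻¹ := memAutL_inv pp hf.1
  have E : ∀ δ : Q.A,
      (if arrGam Q P α = arrGam Q P δ then (1 : k) else 0) =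
        ∑ ρ : Q.A, pp.bas.repr (f⁻¹ (pp.bas (arrGam Q P α))) (arrGam Q P ρ) *
          pp.bas.repr (f (pp.bas (arrGam Q P ρ))) (arrGam Q P δ) := by
    intro δ
    rw [← comp_coeff pp hg hf.1 hfi α δ, ← AlgEquiv.mul_apply, mul_inv_cancel,
      id_coeff]
  by_cases hβ : ∃ β : Q.A, β ≠ α ∧ Q.src β = Q.src α ∧ Q.tgt β = Q.tgt α
  · obtain ⟨β, hβne, hβs, hβt⟩ := hβ
    have hker : ∀ ρ : Q.A, ρ ≠ α → ρ ≠ β →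
        pp.bas.repr (f⁻¹ (pp.bas (arrGam Q P α))) (arrGam Q P ρ) = 0 := by
      intro ρ h1 h2
      apply nonpar_zero pp hfi
      rintro ⟨hp1, hp2⟩
      rcases tgt_two hg (fun h : α = β => hβne h.symm) rfl hβt hp2 with rfl | rfl
      · exact h1 rfl
      · exact h2 rfl
    have hcollapse : ∀ (t : Q.A → k), (∀ ρ, ρ ≠ α → ρ ≠ β → t ρ = 0) →
        ∑ ρ : Q.A, t ρ = t α + t β := by
      intro t ht
      rw [← Finset.sum_subset (Finset.subset_univ ({α, β} : Finset Q.A))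
        (fun ρ _ hρ => ht ρ (fun h => hρ (by simp [h])) (fun h => hρ (by simp [h])))]
      exact Finset.sum_pair (fun h => hβne h.symm)
    have E1 := E α
    have E2 := E β
    rw [if_pos rfl, hcollapse _ (fun ρ h1 h2 => by rw [hker ρ h1 h2, zero_mul])] at E1
    rw [if_neg (fun h => hβne (arrGam_injective h).symm),
      hcollapse _ (fun ρ h1 h2 => by rw [hker ρ h1 h2, zero_mul])] at E2
    rcases triang pp hg hc hnk (fun h : α = β => hβne h.symm) hβs.symm hβt.symm
      with hT | hT
    · have hb : pp.bas.repr (f (pp.bas (arrGam Q P α))) (arrGam Q P β) = 0 := hT f hf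
      rw [hb, mul_zero, zero_add] at E2
      have hy : pp.bas.repr (f⁻¹ (pp.bas (arrGam Q P α))) (arrGam Q P β) = 0 := by
        rcases mul_eq_zero.mp E2.symm with h | h
        · exact h
        · exact absurd h (hf.2 β)
      rw [hy, zero_mul, add_zero] at E1
      exact E1.symm
    · have hcc : pp.bas.repr (f (pp.bas (arrGam Q P β))) (arrGam Q P α) = 0 := hT f hf
      rw [hcc, mul_zero, add_zero] at E1
      exact E1.symm
  · push_neg at hβ
    have E1 := E α
    rw [if_pos rfl] at E1
    rw [Finset.sum_eq_single α ?h1 ?h2] at E1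
    · exact E1.symm
    case h1 =>
      intro ρ _ hρ
      have h0 : pp.bas.repr (f⁻¹ (pp.bas (arrGam Q P α))) (arrGam Q P ρ) = 0 := by
        apply nonpar_zero pp hfi
        rintro ⟨hp1, hp2⟩
        exact hβ ρ hρ hp1 hp2
      rw [h0, zero_mul]
    case h2 =>
      intro h; exact absurd (Finset.mem_univ _) h

lemma memAutStar_inv [Fintype (Gam Q P)] (hg : IsGentle Q P) (hc : Connected Q)
    (hnk : ¬ IsKronecker Q) {f : A ≃ₐ[k] A} (hf : pp.MemAutStar f) :
    pp.MemAutStar f⁻¹ := by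
  refine ⟨memAutL_inv pp hf.1, fun a => ?_⟩
  exact left_ne_zero_of_mul_eq_one (inv_diag pp hg hc hnk hf a)

end Aux4
section Aux5

variable {k : Type} [Field k] {Q : Quiv} {P : Rels Q} {A : Type} [Ring A] [Algebra k A]

/-- The weight of a path under a scaling of the arrows. -/
def wt (c : Q.A → kˣ) : Pth Q → kˣ
  | Sum.inl _ => 1
  | Sum.inr l => (l.map c).prod

lemma wt_pcomp (c : Q.A → kˣ) {p q r : Pth Q} (h : pcomp Q p q = some r) :
    wt c r = wt c p * wt c q := by
  rcases p with v | l <;> rcases q with w | m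
  · simp only [pcomp] at h
    split_ifs at h
    cases h; simp [wt]
  · simp only [pcomp] at h
    split_ifs at h
    cases h; simp [wt]
  · simp only [pcomp] at h
    split_ifs at h
    cases h; simp [wt]
  · simp only [pcomp] at h
    cases h
    simp only [wt, List.map_append, List.prod_append]
    exact mul_comm _ _

lemma wt_mul (c d : Q.A → kˣ) (p : Pth Q) : wt (c * d) p = wt c p * wt d p := by
  rcases p with v | l
  · simp [wt]
  · simp only [wt]
    have : (l.map (c * d)) = l.map (fun a => c a * d a) := rfl
    rw [this, List.prod_map_mul]

lemma wt_one (p : Pth Q) : wt (1 : Q.A → kˣ) p = 1 := by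
  rcases p with v | l
  · rfl
  · simp only [wt]
    have : (l.map (1 : Q.A → kˣ)) = l.map (fun _ => (1 : kˣ)) := rfl
    rw [this]
    simp

lemma wt_arr (c : Q.A → kˣ) (a : Q.A) : wt c (arrGam Q P a).1 = c a := by
  simp [wt, arrGam]

lemma wt_triv (c : Q.A → kˣ) (v : Q.V) : wt c (trivGam Q P v).1 = 1 := rfl

variable (pp : PathAlgPresentation k Q P A)

noncomputable def scLin (c : Q.A → kˣ) : A →ₗ[k] A :=
  pp.bas.constr k (fun C => ((wt c C.1 : kˣ) : k) • pp.bas C)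

lemma scLin_bas (c : Q.A → kˣ) (C : Gam Q P) :
    scLin pp c (pp.bas C) = ((wt c C.1 : kˣ) : k) • pp.bas C :=
  Module.Basis.constr_basis _ _ _ _

lemma scLin_comp (c d : Q.A → kˣ) :
    (scLin pp c).comp (scLin pp d) = scLin pp (c * d) := by
  apply pp.bas.ext
  intro C
  rw [LinearMap.comp_apply, scLin_bas, map_smul, scLin_bas, scLin_bas, smul_smul,
    wt_mul, Units.val_mul, mul_comm]

lemma scLin_one : scLin pp (1 : Q.A → kˣ) = LinearMap.id := by
  apply pp.bas.ext
  intro C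
  rw [scLin_bas, wt_one, Units.val_one, one_smul, LinearMap.id_apply]

lemma scLin_map_one (c : Q.A → kˣ) : scLin pp c 1 = 1 := by
  rw [pp.one_bas, map_sum]
  refine Finset.sum_congr rfl (fun v _ => ?_)
  rw [scLin_bas, wt_triv, Units.val_one, one_smul]

lemma scLin_map_mul (c : Q.A → kˣ) (x y : A) :
    scLin pp c (x * y) = scLin pp c x * scLin pp c y := by
  have key : (LinearMap.mul k A).compr₂ (scLin pp c) =
      (LinearMap.mul k A).compl₁₂ (scLin pp c) (scLin pp c) := by
    apply pp.bas.ext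
    intro C
    apply pp.bas.ext
    intro D
    rw [LinearMap.compr₂_apply, LinearMap.compl₁₂_apply, LinearMap.mul_apply',
      LinearMap.mul_apply']
    rw [scLin_bas, scLin_bas, smul_mul_assoc, mul_smul_comm, smul_smul]
    rw [pp.mul_bas]
    rcases h : pcomp Q C.1 D.1 with _ | p
    · simp
    · simp only [Option.elim]
      by_cases hok : pthOk Q P p
      · erw [basImg_pos pp _ hok, scLin_bas, wt_pcomp c h, Units.val_mul]
      · rw [basImg_neg pp _ hok, map_zero, smul_zero]
  have := LinearMap.congr_fun (LinearMap.congr_fun key x) y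
  rw [LinearMap.compr₂_apply, LinearMap.compl₁₂_apply, LinearMap.mul_apply',
    LinearMap.mul_apply'] at this
  exact this

noncomputable def scEquiv (c : Q.A → kˣ) : A ≃ₗ[k] A :=
  LinearEquiv.ofLinear (scLin pp c) (scLin pp c⁻¹)
    (by rw [scLin_comp, mul_inv_cancel, scLin_one])
    (by rw [scLin_comp, inv_mul_cancel, scLin_one])

noncomputable def scAut (c : Q.A → kˣ) : A ≃ₐ[k] A :=
  AlgEquiv.ofLinearEquiv (scEquiv pp c) (scLin_map_one pp c) (scLin_map_mul pp c)

lemma scAut_bas (c : Q.A → kˣ) (C : Gam Q P) :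
    scAut pp c (pp.bas C) = ((wt c C.1 : kˣ) : k) • pp.bas C := by
  show scEquiv pp c (pp.bas C) = _
  show scLin pp c (pp.bas C) = _
  exact scLin_bas pp c C

lemma algEquiv_ext_bas {f g : A ≃ₐ[k] A} (h : ∀ C : Gam Q P, f (pp.bas C) = g (pp.bas C)) :
    f = g := by
  have : f.toLinearMap = g.toLinearMap := pp.bas.ext h
  ext x
  exact LinearMap.congr_fun this x

lemma scAut_mul (c d : Q.A → kˣ) : scAut pp c * scAut pp d = scAut pp (c * d) := by
  apply algEquiv_ext_bas pp
  intro C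
  rw [AlgEquiv.mul_apply, scAut_bas, map_smul, scAut_bas, smul_smul, scAut_bas,
    wt_mul, Units.val_mul, mul_comm]

lemma scAut_one : scAut pp (1 : Q.A → kˣ) = 1 := by
  apply algEquiv_ext_bas pp
  intro C
  rw [scAut_bas, wt_one, Units.val_one, one_smul, AlgEquiv.one_apply]

lemma scAut_inv (c : Q.A → kˣ) : (scAut pp c)⁻¹ = scAut pp c⁻¹ := by
  apply inv_eq_of_mul_eq_one_right
  rw [scAut_mul, mul_inv_cancel, scAut_one]

lemma coeff_scAut (c : Q.A → kˣ) (C D : Gam Q P) :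
    pp.coeff (scAut pp c) C D = if D = C then ((wt c D.1 : kˣ) : k) else 0 := by
  rw [coeff_def, scAut_bas, map_smul, Finsupp.smul_apply, Module.Basis.repr_self,
    Finsupp.single_apply, smul_eq_mul]
  split_ifs with h
  · rw [mul_one]
  · rw [mul_zero]

lemma scAut_memAutL (c : Q.A → kˣ) : pp.MemAutL (scAut pp c) := by
  intro v
  show scAut pp c (pp.bas (trivGam Q P v)) = pp.bas (trivGam Q P v)
  rw [scAut_bas, wt_triv, Units.val_one, one_smul]

lemma scAut_memAutStar (c : Q.A → kˣ) : pp.MemAutStar (scAut pp c) := by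
  refine ⟨scAut_memAutL pp c, fun a => ?_⟩
  rw [coeff_scAut, if_pos rfl, wt_arr]
  exact (c a).ne_zero

lemma scAut_memSQ1 (c : Q.A → kˣ) : pp.MemSQ1 (scAut pp c) := by
  refine ⟨scAut_memAutStar pp c, fun a => ⟨c a, ?_⟩⟩
  rw [scAut_bas, wt_arr]

/-- Two algebra automorphisms fixing the idempotents and agreeing on arrows agree. -/
lemma eq_of_agree {f g : A ≃ₐ[k] A}
    (he : ∀ v, f (pp.e v) = g (pp.e v))
    (ha : ∀ a, f (pp.bas (arrGam Q P a)) = g (pp.bas (arrGam Q P a))) : f = g := by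
  apply algEquiv_ext_bas pp
  have key : ∀ (n : ℕ) (l : List Q.A) (hp : pthOk Q P (Sum.inr l)), l.length ≤ n →
      f (pp.bas ⟨Sum.inr l, hp⟩) = g (pp.bas ⟨Sum.inr l, hp⟩) := by
    intro n
    induction n with
    | zero =>
      intro l hp hlen
      exact absurd (List.length_eq_zero_iff.mp (Nat.le_zero.mp hlen)) hp.1
    | succ n ih =>
      intro l hp hlen
      obtain ⟨a, t, rfl⟩ := List.exists_cons_of_ne_nil hp.1
      by_cases ht : t = []
      · subst ht
        have : (⟨Sum.inr [a], hp⟩ : Gam Q P) = arrGam Q P a := Subtype.ext rfl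
        rw [this]
        exact ha a
      · have hpt : pthOk Q P (Sum.inr t) := ⟨ht, hp.2.tail⟩
        rw [bas_cons pp a t hp hpt, map_mul, map_mul,
          ih t hpt (by simp at hlen ⊢; omega), ha a]
  intro C
  obtain ⟨p, hp⟩ := C
  rcases p with v | l
  · have : (⟨Sum.inl v, hp⟩ : Gam Q P) = trivGam Q P v := Subtype.ext rfl
    rw [this]
    exact he v
  · exact key l.length l hp le_rfl

end Aux5


/-- `Aut₊^l(A) = S(Q₁) ⋉ N(A)`, with `S(Q₁) ≅ (k*)^{#Q₁}` via rescaling of arrows. -/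
theorem autStar_semidirect
    (k : Type) [Field k] [IsAlgClosed k] (Q : Quiv) (P : Rels Q)
    (A : Type) [Ring A] [Algebra k A]
    (pp : PathAlgPresentation k Q P A) (hg : IsGentle Q P)
    (hc : Connected Q) (hnk : ¬ IsKronecker Q) :
    ∃ (Gs S N : Subgroup (A ≃ₐ[k] A)),
      ((Gs : Set (A ≃ₐ[k] A)) = {f | pp.MemAutStar f}) ∧
      ((S : Set (A ≃ₐ[k] A)) = {f | pp.MemSQ1 f}) ∧
      ((N : Set (A ≃ₐ[k] A)) = {f | pp.MemNA f}) ∧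
      S ≤ Gs ∧ N ≤ Gs ∧
      (∀ f ∈ Gs, ∀ h ∈ N, f * h * f⁻¹ ∈ N) ∧
      (∀ f : A ≃ₐ[k] A, f ∈ S → f ∈ N → f = 1) ∧
      (∀ f ∈ Gs, ∃ h ∈ N, ∃ g ∈ S, f = h * g) ∧
      ∃ iso : (Q.A → kˣ) ≃* ↥S, ∀ (c : Q.A → kˣ) (a : Q.A),
        ((iso c : A ≃ₐ[k] A) (pp.bas (arrGam Q P a)) = (c a : k) • pp.bas (arrGam Q P a)) := by
  haveI : Finite (Gam Q P) := finite_gam hg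
  haveI : Fintype (Gam Q P) := Fintype.ofFinite _
  have hstar_mul : ∀ {f g : A ≃ₐ[k] A}, pp.MemAutStar f → pp.MemAutStar g →
      pp.MemAutStar (f * g) := by
    intro f g hf hg'
    refine ⟨fun v => ?_, fun a => ?_⟩
    · rw [AlgEquiv.mul_apply, hg'.1 v, hf.1 v]
    · rw [mul_diag pp hg hc hnk hf hg' a]
      exact mul_ne_zero (hf.2 a) (hg'.2 a)
  have hstar_one : pp.MemAutStar (1 : A ≃ₐ[k] A) := by
    refine ⟨fun v => AlgEquiv.one_apply _, fun a => ?_⟩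
    rw [coeff_def, id_coeff, if_pos rfl]
    exact one_ne_zero
  have hstar_inv : ∀ {f : A ≃ₐ[k] A}, pp.MemAutStar f → pp.MemAutStar f⁻¹ :=
    fun hf => memAutStar_inv pp hg hc hnk hf
  let Gsub : Subgroup (A ≃ₐ[k] A) :=
    { carrier := {f | pp.MemAutStar f},
      mul_mem' := fun hf hg' => hstar_mul hf hg',
      one_mem' := hstar_one,
      inv_mem' := fun hf => hstar_inv hf }
  let Ssub : Subgroup (A ≃ₐ[k] A) :=
    { carrier := {f | pp.MemSQ1 f},
      mul_mem' := by
        intro f g' hf hg'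
        refine ⟨hstar_mul hf.1 hg'.1, fun a => ?_⟩
        obtain ⟨c1, hc1⟩ := hf.2 a
        obtain ⟨c2, hc2⟩ := hg'.2 a
        refine ⟨c2 * c1, ?_⟩
        rw [AlgEquiv.mul_apply, hc2, map_smul, hc1, smul_smul, ← Units.val_mul]
      one_mem' := ⟨hstar_one,
        fun a => ⟨1, by rw [AlgEquiv.one_apply, Units.val_one, one_smul]⟩⟩,
      inv_mem' := by
        intro f hf
        refine ⟨hstar_inv hf.1, fun a => ?_⟩
        obtain ⟨c, hcv⟩ := hf.2 a
        refine ⟨c⁻¹, ?_⟩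
        have h1 : f⁻¹ (f (pp.bas (arrGam Q P a))) = pp.bas (arrGam Q P a) := by
          rw [← AlgEquiv.mul_apply, inv_mul_cancel, AlgEquiv.one_apply]
        rw [hcv, map_smul] at h1
        calc f⁻¹ (pp.bas (arrGam Q P a))
            = ((c⁻¹ : kˣ) : k) • ((c : k) • f⁻¹ (pp.bas (arrGam Q P a))) := by
              rw [smul_smul, ← Units.val_mul, inv_mul_cancel, Units.val_one, one_smul]
          _ = ((c⁻¹ : kˣ) : k) • pp.bas (arrGam Q P a) := by rw [h1] }
  let Nsub : Subgroup (A ≃ₐ[k] A) :=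
    { carrier := {f | pp.MemNA f},
      mul_mem' := by
        intro f g' hf hg'
        refine ⟨hstar_mul hf.1 hg'.1, fun a => ?_⟩
        rw [mul_diag pp hg hc hnk hf.1 hg'.1 a, hf.2 a, hg'.2 a, one_mul]
      one_mem' := ⟨hstar_one, fun a => by rw [coeff_def, id_coeff, if_pos rfl]⟩,
      inv_mem' := by
        intro f hf
        refine ⟨hstar_inv hf.1, fun a => ?_⟩
        have := inv_diag pp hg hc hnk hf.1 a
        rw [hf.2 a, mul_one] at this
        exact this }
  refine ⟨Gsub, Ssub, Nsub, rfl, rfl, rfl, ?_, ?_, ?_, ?_, ?_, ?_⟩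
  · -- S ≤ Gs
    intro f hf
    exact hf.1
  · -- N ≤ Gs
    intro f hf
    exact hf.1
  · -- conjugation
    intro f hf h hh
    refine ⟨hstar_mul (hstar_mul hf hh.1) (hstar_inv hf), fun a => ?_⟩
    rw [mul_diag pp hg hc hnk (hstar_mul hf hh.1) (hstar_inv hf) a,
      mul_diag pp hg hc hnk hf hh.1 a, hh.2 a, mul_one, mul_comm]
    exact inv_diag pp hg hc hnk hf a
  · -- S ∩ N trivial
    intro f hfS hfN
    apply eq_of_agree pp
    · intro v
      rw [hfS.1.1 v, AlgEquiv.one_apply]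
    · intro a
      obtain ⟨c, hcv⟩ := hfS.2 a
      have hone : (c : k) = 1 := by
        have h1 := hfN.2 a
        rw [coeff_def, hcv, map_smul, Finsupp.smul_apply, Module.Basis.repr_self,
          Finsupp.single_apply, if_pos rfl, smul_eq_mul, mul_one] at h1
        exact h1
      rw [hcv, hone, one_smul, AlgEquiv.one_apply]
  · -- decomposition
    intro f hf
    set c : Q.A → kˣ :=
      fun a => Units.mk0 (pp.coeff f (arrGam Q P a) (arrGam Q P a)) (hf.2 a) with hcdef
    refine ⟨f * (scAut pp c)⁻¹, ?_, scAut pp c, scAut_memSQ1 pp c, ?_⟩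
    · refine ⟨hstar_mul hf (hstar_inv (scAut_memAutStar pp c)), fun a => ?_⟩
      rw [mul_diag pp hg hc hnk hf (hstar_inv (scAut_memAutStar pp c)) a,
        scAut_inv, coeff_scAut, if_pos rfl, wt_arr, Pi.inv_apply,
        Units.val_inv_eq_inv_val]
      exact mul_inv_cancel₀ (hf.2 a)
    · rw [mul_assoc, inv_mul_cancel, mul_one]
  · -- the isomorphism
    refine ⟨MulEquiv.ofBijective
      ({ toFun := fun c => ⟨scAut pp c, scAut_memSQ1 pp c⟩,
         map_one' := Subtype.ext (scAut_one pp),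
         map_mul' := fun c d => Subtype.ext (scAut_mul pp c d).symm } :
           (Q.A → kˣ) →* ↥Ssub) ⟨?_, ?_⟩, fun c a => ?_⟩
    · -- injective
      intro c d hcd
      have hval : scAut pp c = scAut pp d := congrArg Subtype.val hcd
      funext a
      have happ := congrArg (fun (F : A ≃ₐ[k] A) => F (pp.bas (arrGam Q P a))) hval
      rw [scAut_bas, scAut_bas, wt_arr, wt_arr] at happ
      have hsub : (((c a) : k) - ((d a) : k)) • pp.bas (arrGam Q P a) = 0 := by
        rw [sub_smul, happ, sub_self]
      rcases smul_eq_zero.mp hsub with h0 | h0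
      · exact Units.ext (sub_eq_zero.mp h0)
      · exact absurd h0 (pp.bas.ne_zero _)
    · -- surjective
      rintro ⟨f, hfS⟩
      choose cc hcc using hfS.2
      refine ⟨cc, Subtype.ext ?_⟩
      show scAut pp cc = f
      apply eq_of_agree pp
      · intro v
        rw [scAut_memAutL pp cc v, hfS.1.1 v]
      · intro a
        rw [scAut_bas, wt_arr, hcc a]
    · -- the formula
      show scAut pp c (pp.bas (arrGam Q P a)) = _
      rw [scAut_bas, wt_arr]

end GentlePaper
end

section
/- Let A = kQ/⟨P⟩ be a gentle algebra over a field k, let α ≠ β be arrows with s(α) = s(β) and e(α) = e(β), and let γ be an arrow with s(γ) = e(α) such that γα ∈ P and γβ ∉ ⟨P⟩. If f ∈ Aut^l(A) satisfies f_γ(γ) ≠ 0, then f_β(α) = 0. -/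
open scoped Classical

namespace GentlePaper

open PathAlgPresentation



variable {k : Type} [Field k] {Q : Quiv} {P : Rels Q} {A : Type} [Ring A] [Algebra k A]

@[simp] lemma trivGam_val (v : Q.V) : (trivGam Q P v).1 = Sum.inl v := rfl
@[simp] lemma arrGam_val (a : Q.A) : (arrGam Q P a).1 = Sum.inr [a] := rfl
@[simp] lemma thEnd_inl (v : Q.V) : thEnd Q (Sum.inl v) = some v := rfl
@[simp] lemma thStart_inl (v : Q.V) : thStart Q (Sum.inl v) = some v := rfl

lemma pcomp_inl_left_val {v : Q.V} {p q : Pth Q}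
    (h : pcomp Q (Sum.inl v) p = some q) : p = q := by
  cases p with
  | inl w => simp only [pcomp] at h; split_ifs at h with hv; · cases h; rw [hv]
  | inr l => simp only [pcomp] at h; split_ifs at h; · exact (Option.some.inj h)

lemma pcomp_inl_left_end {v : Q.V} {p q : Pth Q}
    (h : pcomp Q (Sum.inl v) p = some q) : thEnd Q p = some v := by
  cases p with
  | inl w => simp only [pcomp] at h; split_ifs at h with hv; · rw [thEnd_inl, hv]
  | inr l => simp only [pcomp] at h; split_ifs at h with hv; · exact hv

lemma pcomp_inl_left_of {v : Q.V} {p : Pth Q}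
    (h : thEnd Q p = some v) : pcomp Q (Sum.inl v) p = some p := by
  cases p with
  | inl w =>
      have : v = w := (Option.some.inj h).symm
      subst this; simp [pcomp]
  | inr l => simp only [pcomp]; rw [if_pos h]

lemma pcomp_inl_right_val {v : Q.V} {p q : Pth Q}
    (h : pcomp Q p (Sum.inl v) = some q) : p = q := by
  cases p with
  | inl w => simp only [pcomp] at h; split_ifs at h with hv; · exact Option.some.inj h
  | inr l => simp only [pcomp] at h; split_ifs at h; · exact (Option.some.inj h)

lemma pcomp_inl_right_of {v : Q.V} {p : Pth Q}
    (h : thStart Q p = some v) : pcomp Q p (Sum.inl v) = some p := by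
  cases p with
  | inl w =>
      have : w = v := Option.some.inj h
      subst this; simp [pcomp]
  | inr l => simp only [pcomp]; rw [if_pos h]

lemma pcomp_inl_right_start {v : Q.V} {p q : Pth Q}
    (h : pcomp Q p (Sum.inl v) = some q) : thStart Q p = some v := by
  cases p with
  | inl w => simp only [pcomp] at h; split_ifs at h with hv; · rw [thStart_inl, hv]
  | inr l => simp only [pcomp] at h; split_ifs at h with hv; · exact hv

lemma pcomp_eq_inl {p q : Pth Q} {w : Q.V}
    (h : pcomp Q p q = some (Sum.inl w)) : p = Sum.inl w ∧ q = Sum.inl w := by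
  cases p with
  | inl v =>
      cases q with
      | inl v' =>
          simp only [pcomp] at h
          split_ifs at h with hv
          · obtain rfl : v = w := Sum.inl.inj (Option.some.inj h)
            exact ⟨rfl, by rw [hv]⟩
      | inr l =>
          simp only [pcomp] at h
          split_ifs at h
          · exact absurd (Option.some.inj h) (by simp)
  | inr l =>
      cases q with
      | inl v =>
          simp only [pcomp] at h
          split_ifs at h
          · exact absurd (Option.some.inj h) (by simp)
      | inr l' =>
          simp only [pcomp] at h
          exact absurd (Option.some.inj h) (by simp)

lemma append_pair {σ : Type} {l l' : List σ} {x y : σ}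
    (h : l ++ l' = [x, y]) (h1 : l ≠ []) (h2 : l' ≠ []) : l = [x] ∧ l' = [y] := by
  cases l with
  | nil => exact absurd rfl h1
  | cons a t =>
    cases t with
    | nil =>
        simp only [List.singleton_append, List.cons.injEq] at h
        exact ⟨by rw [h.1], h.2⟩
    | cons b t2 =>
        exfalso
        apply h2
        have hlen := congrArg List.length h
        simp only [List.cons_append, List.length_cons, List.length_append,
          List.length_nil] at hlen
        exact List.length_eq_zero_iff.mp (by omega)

lemma basImg_ok (pp : PathAlgPresentation k Q P A) (E : Gam Q P) :
    basImg pp.bas E.1 = pp.bas E := by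
  unfold basImg
  rw [dif_pos E.2]
  exact congrArg pp.bas (Subtype.ext rfl)

lemma aux_repr_bas_mul (pp : PathAlgPresentation k Q P A) (C D E : Gam Q P) :
    pp.bas.repr (pp.bas C * pp.bas D) E =
      if pcomp Q C.1 D.1 = some E.1 then 1 else 0 := by
  rw [pp.mul_bas]
  rcases hp : pcomp Q C.1 D.1 with _ | p
  · simp [hp]
  · simp only [hp, Option.elim, Option.some.injEq]
    unfold basImg
    split_ifs with h he
    · have h2 : (⟨p, h⟩ : Gam Q P) = E := Subtype.ext he
      rw [h2, pp.bas.repr_self, Finsupp.single_apply, if_pos rfl]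
    · have h2 : (⟨p, h⟩ : Gam Q P) ≠ E := fun h3 => he (congrArg Subtype.val h3)
      erw [pp.bas.repr_self, Finsupp.single_apply, if_neg h2]
    · exact absurd (‹p = E.1› ▸ E.2) h
    · simp

lemma aux_expand (pp : PathAlgPresentation k Q P A) (z : A) :
    z = ∑ C ∈ (pp.bas.repr z).support, pp.bas.repr z C • pp.bas C := by
  conv_lhs => rw [← pp.bas.linearCombination_repr z]
  rw [Finsupp.linearCombination_apply, Finsupp.sum]

lemma aux_repr_mul (pp : PathAlgPresentation k Q P A) (x y : A) (E : Gam Q P) :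
    pp.bas.repr (x * y) E =
      ∑ C ∈ (pp.bas.repr x).support, ∑ D ∈ (pp.bas.repr y).support,
        pp.bas.repr x C * pp.bas.repr y D *
          (if pcomp Q C.1 D.1 = some E.1 then 1 else 0) := by
  conv_lhs => rw [aux_expand pp x, aux_expand pp y]
  rw [Finset.sum_mul_sum]
  simp only [smul_mul_smul_comm, map_sum, map_smul, Finset.sum_apply',
    Finsupp.smul_apply, smul_eq_mul, aux_repr_bas_mul, mul_assoc]

lemma aux_repr_e_mul (pp : PathAlgPresentation k Q P A) (v : Q.V) (z : A) (E : Gam Q P) :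
    pp.bas.repr (pp.e v * z) E =
      if thEnd Q E.1 = some v then pp.bas.repr z E else 0 := by
  have he : pp.e v = pp.bas (trivGam Q P v) := rfl
  rw [he]
  conv_lhs => rw [aux_expand pp z]
  rw [Finset.mul_sum]
  simp only [mul_smul_comm, map_sum, map_smul, Finset.sum_apply',
    Finsupp.smul_apply, smul_eq_mul, aux_repr_bas_mul, trivGam_val]
  by_cases hE : thEnd Q E.1 = some v
  · rw [if_pos hE]
    rw [Finset.sum_congr rfl (fun D _ => ?_),
      Finset.sum_ite_eq' (pp.bas.repr z).support E (fun D => pp.bas.repr z D)]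
    · split_ifs with hmem
      · rfl
      · exact (Finsupp.notMem_support_iff.mp hmem).symm
    · by_cases hDE : D = E
      · subst hDE
        erw [if_pos rfl, if_pos (pcomp_inl_left_of hE), mul_one]
      · erw [if_neg hDE, if_neg (fun hc => hDE (Subtype.ext (pcomp_inl_left_val hc))), mul_zero]
  · rw [if_neg hE]
    apply Finset.sum_eq_zero
    intro D _
    have hne : pcomp Q (Sum.inl v) D.1 ≠ some E.1 := by
      intro hc
      exact hE ((pcomp_inl_left_val hc) ▸ pcomp_inl_left_end hc)
    erw [if_neg hne, mul_zero]

lemma aux_repr_mul_e (pp : PathAlgPresentation k Q P A) (v : Q.V) (z : A) (E : Gam Q P) :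
    pp.bas.repr (z * pp.e v) E =
      if thStart Q E.1 = some v then pp.bas.repr z E else 0 := by
  have he : pp.e v = pp.bas (trivGam Q P v) := rfl
  rw [he]
  conv_lhs => rw [aux_expand pp z]
  rw [Finset.sum_mul]
  simp only [smul_mul_assoc, map_sum, map_smul, Finset.sum_apply',
    Finsupp.smul_apply, smul_eq_mul, aux_repr_bas_mul, trivGam_val]
  by_cases hE : thStart Q E.1 = some v
  · rw [if_pos hE]
    rw [Finset.sum_congr rfl (fun C _ => ?_),
      Finset.sum_ite_eq' (pp.bas.repr z).support E (fun C => pp.bas.repr z C)]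
    · split_ifs with hmem
      · rfl
      · exact (Finsupp.notMem_support_iff.mp hmem).symm
    · by_cases hCE : C = E
      · subst hCE
        erw [if_pos rfl, if_pos (pcomp_inl_right_of hE), mul_one]
      · erw [if_neg hCE, if_neg (fun hc => hCE (Subtype.ext (pcomp_inl_right_val hc))), mul_zero]
  · rw [if_neg hE]
    apply Finset.sum_eq_zero
    intro C _
    have hne : pcomp Q C.1 (Sum.inl v) ≠ some E.1 := by
      intro hc
      exact hE ((pcomp_inl_right_val hc) ▸ pcomp_inl_right_start hc)
    erw [if_neg hne, mul_zero]

lemma aux_bas_sq (pp : PathAlgPresentation k Q P A) (hg : IsGentle Q P) (a : Q.A) :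
    pp.bas (arrGam Q P a) * pp.bas (arrGam Q P a) = 0 := by
  rw [pp.mul_bas]
  have hpc : pcomp Q (arrGam Q P a).1 (arrGam Q P a).1 = some (Sum.inr [a, a]) := rfl
  rw [hpc]
  show basImg pp.bas (Sum.inr [a, a]) = 0
  unfold basImg
  rw [dif_neg]
  rintro ⟨-, hch⟩
  obtain ⟨⟨hts, hnp⟩, -⟩ := List.isChain_cons_cons.mp hch
  obtain ⟨N, hN⟩ := hg.bounded
  obtain ⟨l₁, a', b', l₂, heq, hP⟩ := hN (List.replicate N a)
    (List.isChain_replicate_of_rel N hts) List.length_replicate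
  have ha' : a' = a := List.eq_of_mem_replicate (a := a) (n := N) (by rw [heq]; simp)
  have hb' : b' = a := List.eq_of_mem_replicate (a := a) (n := N) (by rw [heq]; simp)
  subst ha'; subst hb'; exact hnp hP

lemma aux_triv_coeff (pp : PathAlgPresentation k Q P A) (hg : IsGentle Q P)
    (f : A ≃ₐ[k] A) (hf : pp.MemAutL f) (a : Q.A) (w : Q.V) :
    pp.bas.repr (f (pp.bas (arrGam Q P a))) (trivGam Q P w) = 0 := by
  have h1 : pp.e (Q.tgt a) * pp.bas (arrGam Q P a) = pp.bas (arrGam Q P a) := by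
    have he : pp.e (Q.tgt a) = pp.bas (trivGam Q P (Q.tgt a)) := rfl
    rw [he, pp.mul_bas]
    have hpc : pcomp Q (trivGam Q P (Q.tgt a)).1 (arrGam Q P a).1
        = some (arrGam Q P a).1 := by
      exact pcomp_inl_left_of (by simp [thEnd])
    rw [hpc]
    exact basImg_ok pp _
  have h2 : pp.bas (arrGam Q P a) * pp.e (Q.src a) = pp.bas (arrGam Q P a) := by
    have he : pp.e (Q.src a) = pp.bas (trivGam Q P (Q.src a)) := rfl
    rw [he, pp.mul_bas]
    have hpc : pcomp Q (arrGam Q P a).1 (trivGam Q P (Q.src a)).1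
        = some (arrGam Q P a).1 := by
      exact pcomp_inl_right_of (by simp [thStart])
    rw [hpc]
    exact basImg_ok pp _
  have hx1 : f (pp.bas (arrGam Q P a)) =
      pp.e (Q.tgt a) * (f (pp.bas (arrGam Q P a)) * pp.e (Q.src a)) := by
    conv_lhs => rw [← h1, ← h2]
    rw [map_mul, map_mul, hf, hf]
  by_cases hw1 : w = Q.tgt a
  · by_cases hw2 : w = Q.src a
    · -- loop case: use nilpotency
      have hxx : f (pp.bas (arrGam Q P a)) * f (pp.bas (arrGam Q P a)) = 0 := by
        rw [← map_mul, aux_bas_sq pp hg a, map_zero]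
      by_cases hT : trivGam Q P w ∈ (pp.bas.repr (f (pp.bas (arrGam Q P a)))).support
      · have hstep2 : ∀ D ∈ (pp.bas.repr (f (pp.bas (arrGam Q P a)))).support,
            D ≠ trivGam Q P w →
            pp.bas.repr (f (pp.bas (arrGam Q P a))) (trivGam Q P w) *
              pp.bas.repr (f (pp.bas (arrGam Q P a))) D *
              (if pcomp Q (Sum.inl w) D.1 = some (Sum.inl w : Pth Q) then 1 else 0)
              = 0 := by
          intro D _ hDne
          erw [if_neg (fun hc => hDne (Subtype.ext (pcomp_eq_inl hc).2)), mul_zero]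
        have hstep1 : ∀ C ∈ (pp.bas.repr (f (pp.bas (arrGam Q P a)))).support,
            C ≠ trivGam Q P w →
            (∑ D ∈ (pp.bas.repr (f (pp.bas (arrGam Q P a)))).support,
              pp.bas.repr (f (pp.bas (arrGam Q P a))) C *
                pp.bas.repr (f (pp.bas (arrGam Q P a))) D *
                (if pcomp Q C.1 D.1 = some (Sum.inl w : Pth Q) then 1 else 0)) = 0 := by
          intro C _ hCne
          apply Finset.sum_eq_zero
          intro D _
          erw [if_neg (fun hc => hCne (Subtype.ext (pcomp_eq_inl hc).1)), mul_zero]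
        have h0 : pp.bas.repr
            (f (pp.bas (arrGam Q P a)) * f (pp.bas (arrGam Q P a))) (trivGam Q P w) =
            pp.bas.repr (f (pp.bas (arrGam Q P a))) (trivGam Q P w) *
              pp.bas.repr (f (pp.bas (arrGam Q P a))) (trivGam Q P w) := by
          rw [aux_repr_mul]
          simp only [trivGam_val]
          refine (Eq.trans (Finset.sum_congr rfl fun C _ => Finset.sum_congr rfl fun D _ => by congr) (Finset.sum_eq_single_of_mem _ hT hstep1)).trans ?_
          refine (Eq.trans (Finset.sum_congr rfl fun D _ => by congr) (Finset.sum_eq_single_of_mem _ hT hstep2)).trans ?_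
          simp [pcomp]; intro h; exact absurd rfl h
        rw [hxx, map_zero] at h0
        exact mul_self_eq_zero.mp (by rw [← h0]; simp)
      · exact Finsupp.notMem_support_iff.mp hT
    · rw [hx1, aux_repr_e_mul, aux_repr_mul_e]
      simp [hw2]
  · rw [hx1, aux_repr_e_mul]
    simp [hw1]


/-- For a gentle algebra `A = kQ/⟨P⟩`, parallel arrows `α ≠ β` and an arrow `γ`
with `s(γ) = e(α)`, `γα ∈ P`, `γβ ∉ ⟨P⟩`: any `f ∈ Aut^l(A)` with `f_γ(γ) ≠ 0`
satisfies `f_β(α) = 0`. -/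
theorem coeff_parallel_eq_zero
    (k : Type) [Field k] (Q : Quiv) (P : Rels Q)
    (A : Type) [Ring A] [Algebra k A]
    (pp : PathAlgPresentation k Q P A) (hg : IsGentle Q P)
    (α β γ : Q.A) (hne : α ≠ β)
    (hs : Q.src α = Q.src β) (ht : Q.tgt α = Q.tgt β)
    (hγ : Q.src γ = Q.tgt α)
    (hrel : P α γ) (hnrel : ¬ P β γ)
    (f : A ≃ₐ[k] A) (hf : pp.MemAutL f)
    (hfγ : pp.coeff f (arrGam Q P γ) (arrGam Q P γ) ≠ 0) :
    pp.coeff f (arrGam Q P β) (arrGam Q P α) = 0 := by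
  classical
  have htβγ : Q.tgt β = Q.src γ := by rw [hγ, ht]
  have hokE : pthOk Q P (Sum.inr [β, γ]) :=
    ⟨by simp, List.isChain_cons_cons.mpr ⟨⟨htβγ, hnrel⟩, List.isChain_singleton γ⟩⟩
  set E : Gam Q P := ⟨Sum.inr [β, γ], hokE⟩ with hEdef
  have hEval : E.1 = Sum.inr [β, γ] := rfl
  have hxy : f (pp.bas (arrGam Q P γ)) * f (pp.bas (arrGam Q P α)) = 0 := by
    rw [← map_mul, pp.mul_bas]
    have hpc : pcomp Q (arrGam Q P γ).1 (arrGam Q P α).1 = some (Sum.inr [α, γ]) := rfl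
    rw [hpc]
    have hz : basImg pp.bas (Sum.inr [α, γ]) = 0 := by
      unfold basImg
      rw [dif_neg]
      rintro ⟨-, hch⟩
      exact (List.isChain_cons_cons.mp hch).1.2 hrel
    show f (basImg pp.bas (Sum.inr [α, γ])) = 0
    rw [hz, map_zero]
  have h0 : pp.bas.repr (f (pp.bas (arrGam Q P γ)) * f (pp.bas (arrGam Q P α))) E = 0 := by
    rw [hxy]; simp
  rw [aux_repr_mul] at h0
  show pp.bas.repr (f (pp.bas (arrGam Q P α))) (arrGam Q P β) = 0
  by_contra hne0
  have hfγ' : pp.bas.repr (f (pp.bas (arrGam Q P γ))) (arrGam Q P γ) ≠ 0 := hfγ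
  have hC0 : arrGam Q P γ ∈ (pp.bas.repr (f (pp.bas (arrGam Q P γ)))).support :=
    Finsupp.mem_support_iff.mpr hfγ'
  have hD0 : arrGam Q P β ∈ (pp.bas.repr (f (pp.bas (arrGam Q P α)))).support :=
    Finsupp.mem_support_iff.mpr hne0
  have hterm : ∀ C D : Gam Q P, pcomp Q C.1 D.1 = some E.1 →
      ¬(C = arrGam Q P γ ∧ D = arrGam Q P β) →
      pp.bas.repr (f (pp.bas (arrGam Q P γ))) C *
        pp.bas.repr (f (pp.bas (arrGam Q P α))) D = 0 := by
    intro C D hc hne'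
    rcases hC1 : C.1 with v | l
    · have hCeq : C = trivGam Q P v := Subtype.ext hC1
      rw [hCeq, aux_triv_coeff pp hg f hf γ v, zero_mul]
    · rcases hD1 : D.1 with w | l'
      · have hDeq : D = trivGam Q P w := Subtype.ext hD1
        rw [hDeq, aux_triv_coeff pp hg f hf α w, mul_zero]
      · exfalso
        apply hne'
        rw [hC1, hD1, hEval] at hc
        simp only [pcomp, Option.some.injEq] at hc
        have happ : l' ++ l = [β, γ] := Sum.inr.inj (Option.some.inj hc)
        have hl : l ≠ [] := by have := C.2; rw [hC1] at this; exact this.1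
        have hl' : l' ≠ [] := by have := D.2; rw [hD1] at this; exact this.1
        obtain ⟨h1', h2'⟩ := append_pair happ hl' hl
        exact ⟨Subtype.ext (by rw [hC1, h2', arrGam_val]), Subtype.ext (by rw [hD1, h1', arrGam_val])⟩
  have hstep2 : ∀ D ∈ (pp.bas.repr (f (pp.bas (arrGam Q P α)))).support,
      D ≠ arrGam Q P β →
      pp.bas.repr (f (pp.bas (arrGam Q P γ))) (arrGam Q P γ) *
        pp.bas.repr (f (pp.bas (arrGam Q P α))) D *
        (if pcomp Q (arrGam Q P γ).1 D.1 = some E.1 then 1 else 0) = 0 := by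
    intro D _ hDne
    by_cases hc : pcomp Q (arrGam Q P γ).1 D.1 = some E.1
    · rw [if_pos hc, mul_one]
      exact hterm _ _ hc (fun h => hDne h.2)
    · rw [if_neg hc, mul_zero]
  have hstep1 : ∀ C ∈ (pp.bas.repr (f (pp.bas (arrGam Q P γ)))).support,
      C ≠ arrGam Q P γ →
      (∑ D ∈ (pp.bas.repr (f (pp.bas (arrGam Q P α)))).support,
        pp.bas.repr (f (pp.bas (arrGam Q P γ))) C *
          pp.bas.repr (f (pp.bas (arrGam Q P α))) D *
          (if pcomp Q C.1 D.1 = some E.1 then 1 else 0)) = 0 := by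
    intro C _ hCne
    apply Finset.sum_eq_zero
    intro D _
    by_cases hc : pcomp Q C.1 D.1 = some E.1
    · rw [if_pos hc, mul_one]
      exact hterm _ _ hc (fun h => hCne h.1)
    · rw [if_neg hc, mul_zero]
  rw [Finset.sum_eq_single_of_mem _ hC0 hstep1,
    Finset.sum_eq_single_of_mem _ hD0 hstep2] at h0
  have hpc0 : pcomp Q (arrGam Q P γ).1 (arrGam Q P β).1 = some E.1 := rfl
  rw [if_pos hpc0, mul_one] at h0
  rcases mul_eq_zero.mp h0 with h | h
  · exact hfγ' h
  · exact hne0 h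

end GentlePaper
end
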